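/- arXiv:1607.05610 — 7 statements merged into one kernel-verified Lean document; each statement's English description precedes it below -/
import Mathlib

section
/- The Gallai ideal G₂ = {A ⊆ ω² : there exists k ∈ ω such that for every v ∈ ω² and every α ∈ ω∖{0}, the homothetic grid v + α·({1,2,…,k}×{1,2,…,k}) is not contained in A} is homogeneous. -/
open Set Filter

/-- `I` is an ideal on the countable set `X`: closed under subsets and finite
unions, contains all finite sets, and does not contain the whole set. -/
def IsIdeal {X : Type*} (I : Set (Set X)) : Prop :=
  (∀ A B : Set X, A ∈ I → B ⊆ A → B ∈ I) ∧
  (∀ A B : Set X, A ∈ I → B ∈ I → A ∪ B ∈ I) ∧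
  (∀ A : Set X, A.Finite → A ∈ I) ∧
  (Set.univ : Set X) ∉ I

/-- The restriction `I|A = {B ∩ A : B ∈ I}`. -/
def restr {X : Type*} (I : Set (Set X)) (A : Set X) : Set (Set X) :=
  {C | ∃ B ∈ I, C = B ∩ A}

/-- `I|A ≅ I|B`: there is a bijection `f : B → A` such that for every
`C ⊆ A`, `C ∈ I|A ↔ f⁻¹[C] ∈ I|B`. -/
def RIso {X : Type*} (I : Set (Set X)) (A B : Set X) : Prop :=
  ∃ f : X → X, Set.BijOn f B A ∧
    ∀ C : Set X, C ⊆ A → (C ∈ restr I A ↔ B ∩ f ⁻¹' C ∈ restr I B)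

/-- The homogeneity family `H(I) = {A : I|A ≅ I}`. -/
def HF {X : Type*} (I : Set (Set X)) : Set (Set X) := {A | RIso I A Set.univ}

/-- `I` is homogeneous if `H(I) = I⁺`. -/
def HomogIdeal {X : Type*} (I : Set (Set X)) : Prop := HF I = {A | A ∉ I}

/-- `I` is anti-homogeneous if `H(I) = I*`. -/
def AntiHomogIdeal {X : Type*} (I : Set (Set X)) : Prop := HF I = {A | Aᶜ ∈ I}

/-- `I ≅ J`: a bijection `f` of underlying sets with `A ∈ I ↔ f⁻¹[A] ∈ J`. -/
def Isomorphic {X Y : Type*} (I : Set (Set X)) (J : Set (Set Y)) : Prop :=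
  ∃ f : Y → X, Function.Bijective f ∧ ∀ A : Set X, A ∈ I ↔ f ⁻¹' A ∈ J

/-- The ideal `Fin ⊕ P(ω)` on `{0,1} × ω` (here `Bool × ℕ`, `true` playing the
role of `1`): all sets `A` with `{n : (1,n) ∈ A}` finite. -/
def FinOplusAll : Set (Set (Bool × ℕ)) := {A | {n : ℕ | (true, n) ∈ A}.Finite}

/-- An ideal on `ω` is admissible if it is not isomorphic to `Fin ⊕ P(ω)`. -/
def Admissible (I : Set (Set ℕ)) : Prop := ¬ Isomorphic I FinOplusAll

/-- An injection `f` is bi-`I`-invariant if `f[A] ∈ I ↔ A ∈ I` for all `A`. -/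
def BiInvariant {X : Type*} (I : Set (Set X)) (f : X → X) : Prop :=
  Function.Injective f ∧ ∀ A : Set X, f '' A ∈ I ↔ A ∈ I

/-- The set of fixed points of `f`. -/
def fixedSet {X : Type*} (f : X → X) : Set X := {x | f x = x}

/-- `I` is a maximal ideal. -/
def MaximalIdeal {X : Type*} (I : Set (Set X)) : Prop :=
  IsIdeal I ∧ ∀ A : Set X, A ∈ I ∨ Aᶜ ∈ I

/-- The Gallai ideal `G₂` on `ω²`. -/
def Gallai2 : Set (Set (ℕ × ℕ)) :=
  {A | ∃ k : ℕ, ∀ v : ℕ × ℕ, ∀ α : ℕ, 0 < α →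
    ¬ ((fun p : ℕ × ℕ => (v.1 + α * p.1, v.2 + α * p.2)) ''
        (Set.Icc 1 k ×ˢ Set.Icc 1 k) ⊆ A)}

namespace G2x

def gpt (v : ℕ × ℕ) (α : ℕ) (p : ℕ × ℕ) : ℕ × ℕ := (v.1 + α * p.1, v.2 + α * p.2)
def gset (v : ℕ × ℕ) (α k : ℕ) : Set (ℕ × ℕ) := gpt v α '' (Set.Icc 1 k ×ˢ Set.Icc 1 k)
lemma mem_gallai {A : Set (ℕ × ℕ)} :
    A ∈ Gallai2 ↔ ∃ k, ∀ v α, 0 < α → ¬ gset v α k ⊆ A := Iff.rfl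
lemma mem_gset {v : ℕ × ℕ} {α k : ℕ} {p : ℕ × ℕ} :
    p ∈ gset v α k ↔ ∃ i j, 1 ≤ i ∧ i ≤ k ∧ 1 ≤ j ∧ j ≤ k ∧ p = (v.1 + α * i, v.2 + α * j) := by
  constructor
  · rintro ⟨⟨i, j⟩, hij, rfl⟩
    simp only [Set.mem_prod, Set.mem_Icc] at hij
    exact ⟨i, j, hij.1.1, hij.1.2, hij.2.1, hij.2.2, rfl⟩
  · rintro ⟨i, j, h1, h2, h3, h4, rfl⟩
    exact ⟨(i, j), by simp only [Set.mem_prod, Set.mem_Icc]; omega, rfl⟩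
lemma gset_mono {v : ℕ × ℕ} {α : ℕ} {k k' : ℕ} (h : k ≤ k') : gset v α k ⊆ gset v α k' := by
  intro p hp
  obtain ⟨i, j, h1, h2, h3, h4, rfl⟩ := mem_gset.mp hp
  exact mem_gset.mpr ⟨i, j, h1, by omega, h3, by omega, rfl⟩
lemma downward {A B : Set (ℕ × ℕ)} (hA : A ∈ Gallai2) (h : B ⊆ A) : B ∈ Gallai2 := by
  obtain ⟨k, hk⟩ := mem_gallai.mp hA
  exact mem_gallai.mpr ⟨k, fun v α hα hsub => hk v α hα (hsub.trans h)⟩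
lemma gset_zero {v : ℕ × ℕ} {α : ℕ} : gset v α 0 = ∅ := by
  ext p
  simp only [Set.mem_empty_iff_false, iff_false]
  intro hp
  obtain ⟨i, j, h1, h2, _, _, _⟩ := mem_gset.mp hp
  omega
lemma exists_pos_witness {A : Set (ℕ × ℕ)} (hA : A ∈ Gallai2) :
    ∃ k, 0 < k ∧ ∀ v α, 0 < α → ¬ gset v α k ⊆ A := by
  obtain ⟨k, hk⟩ := mem_gallai.mp hA
  rcases Nat.eq_zero_or_pos k with rfl | h
  · exfalso
    exact hk (0, 0) 1 one_pos (by rw [gset_zero]; exact Set.empty_subset _)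
  · exact ⟨k, h, hk⟩
open Combinatorics in
lemma FG (k : ℕ) : ∃ K, ∀ C : ℕ × ℕ → Bool, ∀ v α, 0 < α →
    ∃ w β c, 0 < β ∧ gset w β k ⊆ gset v α K ∧ ∀ p ∈ gset w β k, C p = c := by
  classical
  obtain ⟨ι, _inst, hι⟩ := Line.exists_mono_in_high_dimension
      (↥(Finset.Icc (1:ℕ) k ×ˢ Finset.Icc (1:ℕ) k)) Bool
  set n := Fintype.card ι with hn
  refine ⟨n * k, ?_⟩
  intro C v α hα
  set e : (ι → ↥(Finset.Icc (1:ℕ) k ×ˢ Finset.Icc (1:ℕ) k)) → ℕ × ℕ :=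
    fun x => ∑ i, ((x i : ℕ × ℕ)) with he
  obtain ⟨l, c, hl⟩ := hι fun x => C (gpt v α (e x))
  set s : Finset ι := Finset.univ.filter (fun i => l.idxFun i = none) with hs
  set d := s.card with hd
  have hdpos : 0 < d := Finset.card_pos.mpr
    ⟨l.proper.choose, by
      rw [hs, Finset.mem_filter]
      exact ⟨Finset.mem_univ _, l.proper.choose_spec⟩⟩
  set b : ℕ × ℕ := ∑ i ∈ sᶜ, ((l.idxFun i).map (fun y => (y : ℕ × ℕ))).getD 0 with hb
  -- key sum computation
  have key : ∀ x : ↥(Finset.Icc (1:ℕ) k ×ˢ Finset.Icc (1:ℕ) k),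
      e (l x) = d • (x : ℕ × ℕ) + b := by
    intro x
    rw [he]
    simp only
    rw [← Finset.sum_add_sum_compl s]
    congr 1
    · rw [← Finset.sum_const]
      apply Finset.sum_congr rfl
      intro i hi
      rw [hs, Finset.mem_filter] at hi
      show ((l.idxFun i).getD x : ℕ × ℕ) = (x : ℕ × ℕ)
      rw [hi.2]
      rfl
    · apply Finset.sum_congr rfl
      intro i hi
      rw [hs, Finset.compl_filter, Finset.mem_filter] at hi
      obtain ⟨y, hy⟩ := Option.ne_none_iff_exists.mp hi.2
      show ((l.idxFun i).getD x : ℕ × ℕ) = _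
      rw [← hy]
      rfl
  -- bounds on b
  have hbbound : b.1 ≤ sᶜ.card * k ∧ b.2 ≤ sᶜ.card * k := by
    constructor
    · rw [hb, Prod.fst_sum, ← smul_eq_mul]
      apply Finset.sum_le_card_nsmul
      intro i hi
      rw [Finset.mem_compl, hs, Finset.mem_filter] at hi
      have hne : l.idxFun i ≠ none := by
        intro hcon; exact hi ⟨Finset.mem_univ _, hcon⟩
      obtain ⟨y, hy⟩ := Option.ne_none_iff_exists.mp hne
      rw [← hy]
      have := y.property
      rw [Finset.mem_product] at this
      have h1 := Finset.mem_Icc.mp this.1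
      simpa using h1.2
    · rw [hb, Prod.snd_sum, ← smul_eq_mul]
      apply Finset.sum_le_card_nsmul
      intro i hi
      rw [Finset.mem_compl, hs, Finset.mem_filter] at hi
      have hne : l.idxFun i ≠ none := by
        intro hcon; exact hi ⟨Finset.mem_univ _, hcon⟩
      obtain ⟨y, hy⟩ := Option.ne_none_iff_exists.mp hne
      rw [← hy]
      have := y.property
      rw [Finset.mem_product] at this
      have h1 := Finset.mem_Icc.mp this.2
      simpa using h1.2
  have hcardc : sᶜ.card = n - d := by rw [Finset.card_compl, hd, hn]
  have hdn : d ≤ n := by rw [hd, hn]; exact Finset.card_le_univ s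
  refine ⟨(v.1 + α * b.1, v.2 + α * b.2), α * d, c, Nat.mul_pos hα hdpos, ?_, ?_⟩
  · -- containment
    intro p hp
    obtain ⟨i, j, h1, h2, h3, h4, rfl⟩ := mem_gset.mp hp
    have hdi : 1 ≤ d * i := Nat.mul_pos hdpos (by omega)
    have hdj : 1 ≤ d * j := Nat.mul_pos hdpos (by omega)
    have hdi2 : d * i ≤ d * k := Nat.mul_le_mul_left d h2
    have hdj2 : d * j ≤ d * k := Nat.mul_le_mul_left d h4
    have hb1 := hbbound.1
    have hb2 := hbbound.2
    rw [hcardc] at hb1 hb2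
    have hsplit : (n - d) * k + d * k = n * k := by
      rw [← Nat.add_mul]
      congr 1
      omega
    refine mem_gset.mpr ⟨b.1 + d * i, b.2 + d * j, by omega, by omega, by omega, by omega, ?_⟩
    simp only [Prod.mk.injEq]
    constructor <;> ring
  · -- monochromatic
    intro p hp
    obtain ⟨i, j, h1, h2, h3, h4, rfl⟩ := mem_gset.mp hp
    have hmem : ((i, j) : ℕ × ℕ) ∈ Finset.Icc (1:ℕ) k ×ˢ Finset.Icc (1:ℕ) k := by
      rw [Finset.mem_product]
      exact ⟨Finset.mem_Icc.mpr ⟨h1, h2⟩, Finset.mem_Icc.mpr ⟨h3, h4⟩⟩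
    have hkey : C (gpt v α (d • ((⟨(i, j), hmem⟩ :
        ↥(Finset.Icc (1:ℕ) k ×ˢ Finset.Icc (1:ℕ) k)) : ℕ × ℕ) + b)) = c := by
      rw [← key ⟨(i, j), hmem⟩]
      exact hl ⟨(i, j), hmem⟩
    rw [← hkey]
    congr 1
    apply Prod.ext <;>
      simp only [gpt, Prod.fst_add, Prod.snd_add, Prod.smul_fst, Prod.smul_snd,
        smul_eq_mul] <;> ring
lemma univ_not_mem : (Set.univ : Set (ℕ × ℕ)) ∉ Gallai2 := by
  rintro ⟨k, hk⟩
  exact hk (0, 0) 1 one_pos (Set.subset_univ _)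

lemma finite_mem {A : Set (ℕ × ℕ)} (h : A.Finite) : A ∈ Gallai2 := by
  classical
  refine mem_gallai.mpr ⟨h.toFinset.card + 1, fun v α hα hsub => ?_⟩
  have hmap : ∀ i ∈ Finset.Icc 1 (h.toFinset.card + 1),
      ((v.1 + α * i, v.2 + α * 1) : ℕ × ℕ) ∈ h.toFinset := by
    intro i hi
    rw [Finset.mem_Icc] at hi
    rw [Set.Finite.mem_toFinset]
    exact hsub (mem_gset.mpr ⟨i, 1, hi.1, hi.2, le_refl 1, by omega, rfl⟩)
  have hinj : Set.InjOn (fun i => ((v.1 + α * i, v.2 + α * 1) : ℕ × ℕ))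
      (Finset.Icc 1 (h.toFinset.card + 1)) := by
    intro a _ b _ hab
    simp only [Prod.mk.injEq] at hab
    have h1 : α * a = α * b := by omega
    exact Nat.eq_of_mul_eq_mul_left hα h1
  have hcard := Finset.card_le_card_of_injOn _ hmap hinj
  rw [Nat.card_Icc] at hcard
  omega


-- NEW CHUNK
lemma union_mem {A B : Set (ℕ × ℕ)} (hA : A ∈ Gallai2) (hB : B ∈ Gallai2) :
    A ∪ B ∈ Gallai2 := by
  classical
  obtain ⟨k₁, hk₁pos, hk₁⟩ := exists_pos_witness hA
  obtain ⟨k₂, hk₂pos, hk₂⟩ := exists_pos_witness hB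
  obtain ⟨K, hK⟩ := FG (max k₁ k₂)
  refine mem_gallai.mpr ⟨K, fun v α hα hsub => ?_⟩
  obtain ⟨w, β, c, hβ, hws, hmono⟩ := hK (fun p => decide (p ∈ A)) v α hα
  cases c
  · apply hk₂ w β hβ
    intro p hp
    have hpk : p ∈ gset w β (max k₁ k₂) := gset_mono (le_max_right _ _) hp
    have hc := hmono p hpk
    have hpA : p ∉ A := by simpa using hc
    have hpAB : p ∈ A ∪ B := hsub (hws hpk)
    exact ((Set.mem_union _ _ _).mp hpAB).resolve_left hpA
  · apply hk₁ w β hβ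
    intro p hp
    have hpk : p ∈ gset w β (max k₁ k₂) := gset_mono (le_max_left _ _) hp
    have hc := hmono p hpk
    simpa using hc

lemma stripX (c : ℕ) : {p : ℕ × ℕ | p.1 ≤ c} ∈ Gallai2 := by
  refine mem_gallai.mpr ⟨c + 1, fun v α hα hsub => ?_⟩
  have hm : ((v.1 + α * (c + 1), v.2 + α * 1) : ℕ × ℕ) ∈ {p : ℕ × ℕ | p.1 ≤ c} :=
    hsub (mem_gset.mpr ⟨c + 1, 1, by omega, le_refl _, le_refl _, by omega, rfl⟩)
  simp only [Set.mem_setOf_eq] at hm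
  have : c + 1 ≤ α * (c + 1) := Nat.le_mul_of_pos_left _ hα
  omega

lemma stripY (c : ℕ) : {p : ℕ × ℕ | p.2 ≤ c} ∈ Gallai2 := by
  refine mem_gallai.mpr ⟨c + 1, fun v α hα hsub => ?_⟩
  have hm : ((v.1 + α * 1, v.2 + α * (c + 1)) : ℕ × ℕ) ∈ {p : ℕ × ℕ | p.2 ≤ c} :=
    hsub (mem_gset.mpr ⟨1, c + 1, le_refl _, by omega, by omega, le_refl _, rfl⟩)
  simp only [Set.mem_setOf_eq] at hm
  have : c + 1 ≤ α * (c + 1) := Nat.le_mul_of_pos_left _ hα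
  omega

def rich (A : Set (ℕ × ℕ)) : Prop := ∀ k, ∃ v α, 0 < α ∧ gset v α k ⊆ A

lemma not_mem_iff_rich {A : Set (ℕ × ℕ)} : A ∉ Gallai2 ↔ rich A := by
  rw [mem_gallai]
  unfold rich
  simp only [not_exists, not_forall, not_not, Classical.not_imp, exists_prop]

lemma step {A : Set (ℕ × ℕ)} (hA : rich A) (b k : ℕ) :
    ∃ q : (ℕ × ℕ) × ℕ, 0 < q.2 ∧ gset q.1 q.2 k ⊆ A ∧
      ∀ p ∈ gset q.1 q.2 k, b < p.1 ∧ b < p.2 := by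
  have h1 : A ∩ {p : ℕ × ℕ | b < p.1 ∧ b < p.2} ∉ Gallai2 := by
    intro hmem
    have hu : A ⊆ (A ∩ {p : ℕ × ℕ | b < p.1 ∧ b < p.2}) ∪
        ({p : ℕ × ℕ | p.1 ≤ b} ∪ {p : ℕ × ℕ | p.2 ≤ b}) := by
      intro p hp
      by_cases hb1 : b < p.1
      · by_cases hb2 : b < p.2
        · exact Or.inl ⟨hp, hb1, hb2⟩
        · exact Or.inr (Or.inr (by simpa using by omega))
      · exact Or.inr (Or.inl (by simp only [Set.mem_setOf_eq]; omega))
    exact (not_mem_iff_rich.mpr hA)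
      (downward (union_mem hmem (union_mem (stripX b) (stripY b))) hu)
  obtain ⟨v, α, hα, hsub⟩ := (not_mem_iff_rich.mp h1) k
  exact ⟨(v, α), hα, fun p hp => (hsub hp).1, fun p hp => (hsub hp).2⟩
def lg (x : ℕ) : ℕ := Nat.log 2 (x + 1)

lemma lg_le (x : ℕ) : 2 ^ lg x ≤ x + 1 := Nat.pow_log_le_self 2 (by omega)

lemma lg_lt (x : ℕ) : x + 1 < 2 ^ (lg x + 1) := Nat.lt_pow_succ_log_self (by norm_num) _

lemma lg_mono {x y : ℕ} (h : x ≤ y) : lg x ≤ lg y := Nat.log_mono_right (by omega)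

lemma lg_ge {x m : ℕ} (h : 2 ^ m ≤ x + 1) : m ≤ lg x :=
  (Nat.le_log_iff_pow_le (by norm_num) (by omega)).mpr h

lemma mull {α a b : ℕ} (h : a ≤ b) : α * a ≤ α * b := Nat.mul_le_mul_left α h

lemma run1d {α : ℕ} (hα : 0 < α) (v₁ k : ℕ) (hk : 1 ≤ k) :
    ∃ i₀ a, i₀ + k ≤ 8 * k + 8 ∧ ∀ s, 1 ≤ s → s ≤ k → lg (v₁ + α * (i₀ + s)) = a := by
  by_cases hcase : lg (v₁ + α * (8 * k + 8 - k + 1)) = lg (v₁ + α * (8 * k + 8))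
  · refine ⟨8 * k + 8 - k, lg (v₁ + α * (8 * k + 8)), by omega, fun s hs1 hs2 => ?_⟩
    have hmul1 : α * (8 * k + 8 - k + s) ≤ α * (8 * k + 8) := mull (by omega)
    have hmul2 : α * (8 * k + 8 - k + 1) ≤ α * (8 * k + 8 - k + s) := mull (by omega)
    have h1 : lg (v₁ + α * (8 * k + 8 - k + s)) ≤ lg (v₁ + α * (8 * k + 8)) := lg_mono (by omega)
    have h2 : lg (v₁ + α * (8 * k + 8 - k + 1)) ≤ lg (v₁ + α * (8 * k + 8 - k + s)) :=
      lg_mono (by omega)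
    omega
  · have hmul0 : α * (8 * k + 8 - k + 1) ≤ α * (8 * k + 8) := mull (by omega)
    have hle : lg (v₁ + α * (8 * k + 8 - k + 1)) ≤ lg (v₁ + α * (8 * k + 8)) := lg_mono (by omega)
    have hL1 : 1 ≤ lg (v₁ + α * (8 * k + 8)) := by
      rcases Nat.lt_or_ge (lg (v₁ + α * (8 * k + 8 - k + 1))) (lg (v₁ + α * (8 * k + 8))) with h | h
      · omega
      · exact absurd (le_antisymm hle h) hcase
    refine ⟨8 * k + 8 - 2 * k, lg (v₁ + α * (8 * k + 8)) - 1, by omega, fun s hs1 hs2 => ?_⟩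
    have hmul3 : α * (8 * k + 8 - 2 * k + s) ≤ α * (8 * k + 8 - k + 1) :=
      mull (by omega)
    have hup : lg (v₁ + α * (8 * k + 8 - 2 * k + s)) ≤ lg (v₁ + α * (8 * k + 8)) - 1 := by
      have h1 : lg (v₁ + α * (8 * k + 8 - 2 * k + s)) ≤ lg (v₁ + α * (8 * k + 8 - k + 1)) :=
        lg_mono (by omega)
      omega
    have hlow : lg (v₁ + α * (8 * k + 8)) - 1 ≤ lg (v₁ + α * (8 * k + 8 - 2 * k + s)) := by
      apply lg_ge
      have h2L : 2 ^ lg (v₁ + α * (8 * k + 8)) ≤ v₁ + α * (8 * k + 8) + 1 := lg_le _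
      have hmul : α * (8 * k + 8) ≤ α * (2 * (8 * k + 8 - 2 * k + s)) :=
        mull (by omega)
      have hexp : α * (2 * (8 * k + 8 - 2 * k + s)) = 2 * (α * (8 * k + 8 - 2 * k + s)) := by
        ring
      have hpow : 2 ^ lg (v₁ + α * (8 * k + 8)) =
          2 ^ (lg (v₁ + α * (8 * k + 8)) - 1) * 2 := by
        conv_lhs => rw [show lg (v₁ + α * (8 * k + 8)) = (lg (v₁ + α * (8 * k + 8)) - 1) + 1
          from by omega]
        rw [pow_succ]
      omega
    omega

lemma subcell {v : ℕ × ℕ} {α k : ℕ} (hα : 0 < α) (hk : 1 ≤ k) :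
    ∃ w a c, gset w α k ⊆ gset v α (8 * k + 8) ∧
      ∀ p ∈ gset w α k, lg p.1 = a ∧ lg p.2 = c := by
  obtain ⟨i₀, a, hi, ha⟩ := run1d hα v.1 k hk
  obtain ⟨j₀, c, hj, hc⟩ := run1d hα v.2 k hk
  refine ⟨(v.1 + α * i₀, v.2 + α * j₀), a, c, ?_, ?_⟩
  · intro p hp
    obtain ⟨i, j, h1, h2, h3, h4, rfl⟩ := mem_gset.mp hp
    refine mem_gset.mpr ⟨i₀ + i, j₀ + j, by omega, by omega, by omega, by omega, ?_⟩
    simp only [Prod.mk.injEq]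
    constructor <;> ring
  · intro p hp
    obtain ⟨i, j, h1, h2, h3, h4, rfl⟩ := mem_gset.mp hp
    constructor
    · have h5 := ha i h1 h2
      rw [← h5]
      congr 1
      ring
    · have h5 := hc j h3 h4
      rw [← h5]
      congr 1
      ring
open Classical in
noncomputable def pick (A : Set (ℕ × ℕ)) (b k : ℕ) : (ℕ × ℕ) × ℕ :=
  if h : ∃ q : (ℕ × ℕ) × ℕ, 0 < q.2 ∧ gset q.1 q.2 k ⊆ A ∧
      ∀ p ∈ gset q.1 q.2 k, b < p.1 ∧ b < p.2
  then h.choose else ((0, 0), 1)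

lemma pick_spec {A : Set (ℕ × ℕ)} (hA : rich A) (b k : ℕ) :
    0 < (pick A b k).2 ∧ gset (pick A b k).1 (pick A b k).2 k ⊆ A ∧
      ∀ p ∈ gset (pick A b k).1 (pick A b k).2 k, b < p.1 ∧ b < p.2 := by
  have h := step hA b k
  unfold pick
  rw [dif_pos h]
  exact h.choose_spec

def Nn (n : ℕ) : ℕ := 2 ^ (max (Nat.unpair n).1 (Nat.unpair n).2 + 1)

lemma Nn_pos (n : ℕ) : 0 < Nn n := Nat.pow_pos (by norm_num)

def bnd (q : (ℕ × ℕ) × ℕ) (k : ℕ) : ℕ := q.1.1 + q.1.2 + q.2 * k + q.2 * k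

noncomputable def aux (A : Set (ℕ × ℕ)) : ℕ → ((ℕ × ℕ) × ℕ) × ℕ
  | 0 => (pick A 0 (Nn 0), bnd (pick A 0 (Nn 0)) (Nn 0))
  | n + 1 => (pick A (aux A n).2 (Nn (n + 1)),
      max (aux A n).2 (bnd (pick A (aux A n).2 (Nn (n + 1))) (Nn (n + 1))))

noncomputable def Bb (A : Set (ℕ × ℕ)) : ℕ → ℕ
  | 0 => 0
  | n + 1 => (aux A n).2

noncomputable def Vn (A : Set (ℕ × ℕ)) (n : ℕ) : ℕ × ℕ := (aux A n).1.1
noncomputable def an (A : Set (ℕ × ℕ)) (n : ℕ) : ℕ := (aux A n).1.2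
noncomputable def Gn (A : Set (ℕ × ℕ)) (n : ℕ) : Set (ℕ × ℕ) := gset (Vn A n) (an A n) (Nn n)

lemma aux_fst (A : Set (ℕ × ℕ)) (n : ℕ) : (aux A n).1 = pick A (Bb A n) (Nn n) := by
  cases n <;> rfl

lemma aux_bnd (A : Set (ℕ × ℕ)) (n : ℕ) : bnd ((aux A n).1) (Nn n) ≤ (aux A n).2 := by
  cases n
  · exact le_of_eq (by rfl)
  · exact le_max_right _ _

lemma an_pos {A : Set (ℕ × ℕ)} (hA : rich A) (n : ℕ) : 0 < an A n := by
  have h := (pick_spec hA (Bb A n) (Nn n)).1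
  rw [an, aux_fst]
  exact h

lemma Gn_sub {A : Set (ℕ × ℕ)} (hA : rich A) (n : ℕ) : Gn A n ⊆ A := by
  have h := (pick_spec hA (Bb A n) (Nn n)).2.1
  rw [Gn, Vn, an, aux_fst]
  exact h

lemma Gn_lb {A : Set (ℕ × ℕ)} (hA : rich A) (n : ℕ) {p : ℕ × ℕ} (hp : p ∈ Gn A n) :
    Bb A n < p.1 ∧ Bb A n < p.2 := by
  have h := (pick_spec hA (Bb A n) (Nn n)).2.2
  rw [Gn, Vn, an, aux_fst] at hp
  exact h p hp

lemma Gn_ub (A : Set (ℕ × ℕ)) (n : ℕ) {p : ℕ × ℕ} (hp : p ∈ Gn A n) :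
    p.1 ≤ Bb A (n + 1) ∧ p.2 ≤ Bb A (n + 1) := by
  obtain ⟨i, j, h1, h2, h3, h4, rfl⟩ := mem_gset.mp hp
  have hb := aux_bnd A n
  have hi : an A n * i ≤ an A n * Nn n := mull h2
  have hj : an A n * j ≤ an A n * Nn n := mull h4
  have hBb : Bb A (n + 1) = (aux A n).2 := rfl
  rw [bnd] at hb
  constructor
  · simp only []
    calc (Vn A n).1 + an A n * i ≤ (aux A n).1.1.1 + (aux A n).1.1.2 +
        (aux A n).1.2 * Nn n + (aux A n).1.2 * Nn n := by
          rw [Vn, an] at *; omega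
    _ ≤ Bb A (n + 1) := by rw [hBb]; exact hb
  · simp only []
    calc (Vn A n).2 + an A n * j ≤ (aux A n).1.1.1 + (aux A n).1.1.2 +
        (aux A n).1.2 * Nn n + (aux A n).1.2 * Nn n := by
          rw [Vn, an] at *; omega
    _ ≤ Bb A (n + 1) := by rw [hBb]; exact hb

lemma Bb_le_succ (A : Set (ℕ × ℕ)) (n : ℕ) : Bb A n ≤ Bb A (n + 1) := by
  cases n
  · exact Nat.zero_le _
  · show (aux A _).2 ≤ max (aux A _).2 _
    exact le_max_left _ _

lemma Bb_mono (A : Set (ℕ × ℕ)) : Monotone (Bb A) :=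
  monotone_nat_of_le_succ (Bb_le_succ A)

lemma Gn_disj {A : Set (ℕ × ℕ)} (hA : rich A) {n m : ℕ} {p : ℕ × ℕ}
    (hn : p ∈ Gn A n) (hm : p ∈ Gn A m) : n = m := by
  rcases Nat.lt_trichotomy n m with h | h | h
  · exfalso
    have h1 := (Gn_lb hA m hm).1
    have h2 := (Gn_ub A n hn).1
    have h3 : Bb A (n + 1) ≤ Bb A m := Bb_mono A h
    omega
  · exact h
  · exfalso
    have h1 := (Gn_lb hA n hn).1
    have h2 := (Gn_ub A m hm).1
    have h3 : Bb A (m + 1) ≤ Bb A n := Bb_mono A h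
    omega

def ci (p : ℕ × ℕ) : ℕ := Nat.pair (lg p.1) (lg p.2)

lemma unpair_ci (p : ℕ × ℕ) : Nat.unpair (ci p) = (lg p.1, lg p.2) := Nat.unpair_pair _ _

noncomputable def uu (A : Set (ℕ × ℕ)) (p : ℕ × ℕ) : ℕ × ℕ :=
  ((Vn A (ci p)).1 + an A (ci p) * (p.1 + 2 - 2 ^ lg p.1),
   (Vn A (ci p)).2 + an A (ci p) * (p.2 + 2 - 2 ^ lg p.2))

lemma idx_ge (x : ℕ) : 1 ≤ x + 2 - 2 ^ lg x := by
  have := lg_le x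
  omega

lemma idx_le (x : ℕ) : x + 2 - 2 ^ lg x ≤ 2 ^ lg x := by
  have h1 := lg_lt x
  have h2 : (2:ℕ) ^ (lg x + 1) = 2 ^ lg x * 2 := pow_succ 2 (lg x)
  omega

lemma pow_le_Nn_ci (p : ℕ × ℕ) : 2 ^ lg p.1 ≤ Nn (ci p) ∧ 2 ^ lg p.2 ≤ Nn (ci p) := by
  rw [Nn, unpair_ci]
  constructor
  · exact Nat.pow_le_pow_right (by norm_num) (by simp [le_max_left]; omega)
  · exact Nat.pow_le_pow_right (by norm_num) (by simp [le_max_right]; omega)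

lemma uu_mem_Gn (A : Set (ℕ × ℕ)) (p : ℕ × ℕ) : uu A p ∈ Gn A (ci p) := by
  refine mem_gset.mpr ⟨p.1 + 2 - 2 ^ lg p.1, p.2 + 2 - 2 ^ lg p.2,
    idx_ge _, le_trans (idx_le _) (pow_le_Nn_ci p).1,
    idx_ge _, le_trans (idx_le _) (pow_le_Nn_ci p).2, rfl⟩

lemma uu_mem {A : Set (ℕ × ℕ)} (hA : rich A) (p : ℕ × ℕ) : uu A p ∈ A :=
  Gn_sub hA _ (uu_mem_Gn A p)

lemma uu_inj {A : Set (ℕ × ℕ)} (hA : rich A) : Function.Injective (uu A) := by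
  intro p q h
  have hp := uu_mem_Gn A p
  have hq := uu_mem_Gn A q
  rw [h] at hp
  have hci : ci q = ci p := Gn_disj hA hq hp
  have hlg1 : lg q.1 = lg p.1 := by
    have := congrArg (fun x => (Nat.unpair x).1) hci
    simpa [unpair_ci] using this
  have hlg2 : lg q.2 = lg p.2 := by
    have := congrArg (fun x => (Nat.unpair x).2) hci
    simpa [unpair_ci] using this
  have hapos : 0 < an A (ci p) := an_pos hA _
  rw [uu, uu, hci, hlg1, hlg2, Prod.mk.injEq] at h
  have h1 : an A (ci p) * (p.1 + 2 - 2 ^ lg p.1) = an A (ci p) * (q.1 + 2 - 2 ^ lg p.1) := by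
    omega
  have h2 : an A (ci p) * (p.2 + 2 - 2 ^ lg p.2) = an A (ci p) * (q.2 + 2 - 2 ^ lg p.2) := by
    omega
  have e1 : p.1 + 2 - 2 ^ lg p.1 = q.1 + 2 - 2 ^ lg p.1 := Nat.eq_of_mul_eq_mul_left hapos h1
  have e2 : p.2 + 2 - 2 ^ lg p.2 = q.2 + 2 - 2 ^ lg p.2 := Nat.eq_of_mul_eq_mul_left hapos h2
  have g1 := lg_le p.1
  have g2 := lg_le p.2
  have g3 := lg_le q.1
  have g4 := lg_le q.2
  rw [hlg1] at g3
  rw [hlg2] at g4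
  apply Prod.ext <;> omega

lemma uu_apply' (A : Set (ℕ × ℕ)) (z : ℕ × ℕ) : uu A z =
    ((Vn A (ci z)).1 + an A (ci z) * (z.1 + 2 - 2 ^ lg z.1),
     (Vn A (ci z)).2 + an A (ci z) * (z.2 + 2 - 2 ^ lg z.2)) := rfl

lemma no_cross {A : Set (ℕ × ℕ)} (hA : rich A) {n m l : ℕ} {p q r : ℕ × ℕ}
    (hp : p ∈ Gn A n) (hq : q ∈ Gn A m) (hr : r ∈ Gn A l)
    (h1 : r.1 = q.1) (h2 : r.2 = p.2) (hnm : n < m) : False := by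
  have hq1 := (Gn_lb hA m hq).1
  have hp2 := (Gn_ub A n hp).2
  have hr1 := (Gn_ub A l hr).1
  have hr2 := (Gn_lb hA l hr).2
  have hml : m ≤ l := by
    by_contra hc
    push_neg at hc
    have : Bb A (l + 1) ≤ Bb A m := Bb_mono A (by omega)
    omega
  have h3 : Bb A (n + 1) ≤ Bb A m := Bb_mono A (by omega)
  have h4 : Bb A m ≤ Bb A l := Bb_mono A hml
  omega

lemma uu_fwd {A D : Set (ℕ × ℕ)} (hA : rich A) (hD : rich D) : rich (uu A '' D) := by
  intro k
  obtain ⟨v, α, hα, hsub⟩ := hD (8 * (k + 1) + 8)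
  obtain ⟨w, a, c, hws, hcell⟩ := subcell hα (show 1 ≤ k + 1 by omega)
  have hsubD : gset w α (k + 1) ⊆ D := fun p hp => hsub (hws hp)
  have hmem : ∀ s t : ℕ, 1 ≤ s → s ≤ k + 1 → 1 ≤ t → t ≤ k + 1 →
      ((w.1 + α * s, w.2 + α * t) : ℕ × ℕ) ∈ gset w α (k + 1) := fun s t h1 h2 h3 h4 =>
    mem_gset.mpr ⟨s, t, h1, h2, h3, h4, rfl⟩
  have hlgx : ∀ s, 1 ≤ s → s ≤ k + 1 → lg (w.1 + α * s) = a := by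
    intro s h1 h2
    exact (hcell _ (hmem s 1 h1 h2 (le_refl _) (by omega))).1
  have hlgy : ∀ t, 1 ≤ t → t ≤ k + 1 → lg (w.2 + α * t) = c := by
    intro t h1 h2
    exact (hcell _ (hmem 1 t (le_refl _) (by omega) h1 h2)).2
  have h2a : 2 ^ a ≤ w.1 + α * 1 + 1 := by
    rw [← hlgx 1 (le_refl _) (by omega)]
    exact lg_le _
  have h2c : 2 ^ c ≤ w.2 + α * 1 + 1 := by
    rw [← hlgy 1 (le_refl _) (by omega)]
    exact lg_le _
  refine ⟨uu A (w.1 + α * 1, w.2 + α * 1), an A (Nat.pair a c) * α,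
    Nat.mul_pos (an_pos hA _) hα, ?_⟩
  intro p hp
  obtain ⟨d, e, hd1, hd2, he1, he2, rfl⟩ := mem_gset.mp hp
  refine ⟨(w.1 + α * (1 + d), w.2 + α * (1 + e)),
    hsubD (hmem _ _ (by omega) (by omega) (by omega) (by omega)), ?_⟩
  have e1 : uu A (w.1 + α * (1 + d), w.2 + α * (1 + e)) =
      ((Vn A (Nat.pair a c)).1 + an A (Nat.pair a c) * (w.1 + α * (1 + d) + 2 - 2 ^ a),
       (Vn A (Nat.pair a c)).2 + an A (Nat.pair a c) * (w.2 + α * (1 + e) + 2 - 2 ^ c)) := by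
    rw [uu_apply']
    simp only
    rw [show ci ((w.1 + α * (1 + d), w.2 + α * (1 + e)) : ℕ × ℕ) = Nat.pair a c from by
      rw [ci]
      simp only
      rw [hlgx (1 + d) (by omega) (by omega), hlgy (1 + e) (by omega) (by omega)]]
    rw [show lg (((w.1 + α * (1 + d), w.2 + α * (1 + e)) : ℕ × ℕ)).1 = a from
      hlgx (1 + d) (by omega) (by omega)]
    rw [show lg (((w.1 + α * (1 + d), w.2 + α * (1 + e)) : ℕ × ℕ)).2 = c from
      hlgy (1 + e) (by omega) (by omega)]
  have e2 : uu A (w.1 + α * 1, w.2 + α * 1) =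
      ((Vn A (Nat.pair a c)).1 + an A (Nat.pair a c) * (w.1 + α * 1 + 2 - 2 ^ a),
       (Vn A (Nat.pair a c)).2 + an A (Nat.pair a c) * (w.2 + α * 1 + 2 - 2 ^ c)) := by
    rw [uu_apply']
    simp only
    rw [show ci ((w.1 + α * 1, w.2 + α * 1) : ℕ × ℕ) = Nat.pair a c from by
      rw [ci]
      simp only
      rw [hlgx 1 (le_refl _) (by omega), hlgy 1 (le_refl _) (by omega)]]
    rw [show lg (((w.1 + α * 1, w.2 + α * 1) : ℕ × ℕ)).1 = a from
      hlgx 1 (le_refl _) (by omega)]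
    rw [show lg (((w.1 + α * 1, w.2 + α * 1) : ℕ × ℕ)).2 = c from
      hlgy 1 (le_refl _) (by omega)]
  rw [e1, e2]
  have hidx1 : w.1 + α * (1 + d) + 2 - 2 ^ a = (w.1 + α * 1 + 2 - 2 ^ a) + α * d := by
    have hexp : α * (1 + d) = α * 1 + α * d := by ring
    omega
  have hidx2 : w.2 + α * (1 + e) + 2 - 2 ^ c = (w.2 + α * 1 + 2 - 2 ^ c) + α * e := by
    have hexp : α * (1 + e) = α * 1 + α * e := by ring
    omega
  rw [hidx1, hidx2]
  simp only [Prod.mk.injEq]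
  constructor <;> ring

lemma uu_rev {A D : Set (ℕ × ℕ)} (hA : rich A) (hD : rich (uu A '' D)) : rich D := by
  intro k
  obtain ⟨w, γ, hγ, hsub⟩ := hD (k + 2)
  have hex : ∀ s t : ℕ, ∃ z, 1 ≤ s → s ≤ k + 2 → 1 ≤ t → t ≤ k + 2 →
      z ∈ D ∧ uu A z = ((w.1 + γ * s, w.2 + γ * t) : ℕ × ℕ) := by
    intro s t
    by_cases h : 1 ≤ s ∧ s ≤ k + 2 ∧ 1 ≤ t ∧ t ≤ k + 2
    · obtain ⟨z, hzD, hze⟩ := hsub (mem_gset.mpr ⟨s, t, h.1, h.2.1, h.2.2.1, h.2.2.2, rfl⟩)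
      exact ⟨z, fun _ _ _ _ => ⟨hzD, hze⟩⟩
    · exact ⟨(0, 0), fun h1 h2 h3 h4 => absurd ⟨h1, h2, h3, h4⟩ h⟩
  choose x hx using hex
  have hone : (1:ℕ) ≤ k + 2 := by omega
  have hmemGn : ∀ s t : ℕ, 1 ≤ s → s ≤ k + 2 → 1 ≤ t → t ≤ k + 2 →
      ((w.1 + γ * s, w.2 + γ * t) : ℕ × ℕ) ∈ Gn A (ci (x s t)) := by
    intro s t h1 h2 h3 h4
    have h := uu_mem_Gn A (x s t)
    rwa [(hx s t h1 h2 h3 h4).2] at h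
  have hsame : ∀ s t : ℕ, 1 ≤ s → s ≤ k + 2 → 1 ≤ t → t ≤ k + 2 →
      ci (x s t) = ci (x 1 1) := by
    intro s t h1 h2 h3 h4
    have hq := hmemGn s t h1 h2 h3 h4
    have hp := hmemGn 1 1 (le_refl _) hone (le_refl _) hone
    have hr1 := hmemGn s 1 h1 h2 (le_refl _) hone
    have hr2 := hmemGn 1 t (le_refl _) hone h3 h4
    rcases Nat.lt_trichotomy (ci (x s t)) (ci (x 1 1)) with h | h | h
    · exact (no_cross hA hq hp hr2 rfl rfl h).elim
    · exact h
    · exact (no_cross hA hp hq hr1 rfl rfl h).elim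
  have hlgeq : ∀ s t : ℕ, 1 ≤ s → s ≤ k + 2 → 1 ≤ t → t ≤ k + 2 →
      lg ((x s t).1) = lg ((x 1 1).1) ∧ lg ((x s t).2) = lg ((x 1 1).2) := by
    intro s t h1 h2 h3 h4
    have h := congrArg Nat.unpair (hsame s t h1 h2 h3 h4)
    rw [unpair_ci, unpair_ci] at h
    exact Prod.mk.inj h
  have hβ : 0 < an A (ci (x 1 1)) := an_pos hA _
  have hE1 : ∀ s t : ℕ, 1 ≤ s → s ≤ k + 2 → 1 ≤ t → t ≤ k + 2 →
      (Vn A (ci (x 1 1))).1 + an A (ci (x 1 1)) * ((x s t).1 + 2 - 2 ^ lg ((x 1 1).1))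
        = w.1 + γ * s := by
    intro s t h1 h2 h3 h4
    have h := (hx s t h1 h2 h3 h4).2
    rw [uu_apply', hsame s t h1 h2 h3 h4, (hlgeq s t h1 h2 h3 h4).1,
      (hlgeq s t h1 h2 h3 h4).2] at h
    have := congrArg Prod.fst h
    simpa using this
  have hE2 : ∀ s t : ℕ, 1 ≤ s → s ≤ k + 2 → 1 ≤ t → t ≤ k + 2 →
      (Vn A (ci (x 1 1))).2 + an A (ci (x 1 1)) * ((x s t).2 + 2 - 2 ^ lg ((x 1 1).2))
        = w.2 + γ * t := by
    intro s t h1 h2 h3 h4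
    have h := (hx s t h1 h2 h3 h4).2
    rw [uu_apply', hsame s t h1 h2 h3 h4, (hlgeq s t h1 h2 h3 h4).1,
      (hlgeq s t h1 h2 h3 h4).2] at h
    have := congrArg Prod.snd h
    simpa using this
  -- extract the common difference
  have h11 := hE1 1 1 (le_refl _) hone (le_refl _) hone
  have h21 := hE1 2 1 (by omega) (by omega) (le_refl _) hone
  have hImul : an A (ci (x 1 1)) * ((x 2 1).1 + 2 - 2 ^ lg ((x 1 1).1)) =
      an A (ci (x 1 1)) * ((x 1 1).1 + 2 - 2 ^ lg ((x 1 1).1)) + γ := by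
    have hgm : γ * 2 = γ * 1 + γ := by ring
    omega
  have hIlt : ((x 1 1).1 + 2 - 2 ^ lg ((x 1 1).1)) < ((x 2 1).1 + 2 - 2 ^ lg ((x 1 1).1)) := by
    apply Nat.lt_of_mul_lt_mul_left (a := an A (ci (x 1 1)))
    omega
  have hg : γ = an A (ci (x 1 1)) *
      (((x 2 1).1 + 2 - 2 ^ lg ((x 1 1).1)) - ((x 1 1).1 + 2 - 2 ^ lg ((x 1 1).1))) := by
    have hsplit : an A (ci (x 1 1)) * ((x 2 1).1 + 2 - 2 ^ lg ((x 1 1).1)) =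
        an A (ci (x 1 1)) * (((x 1 1).1 + 2 - 2 ^ lg ((x 1 1).1)) +
          (((x 2 1).1 + 2 - 2 ^ lg ((x 1 1).1)) - ((x 1 1).1 + 2 - 2 ^ lg ((x 1 1).1)))) := by
      congr 1
      omega
    have hdist : an A (ci (x 1 1)) * (((x 1 1).1 + 2 - 2 ^ lg ((x 1 1).1)) +
        (((x 2 1).1 + 2 - 2 ^ lg ((x 1 1).1)) - ((x 1 1).1 + 2 - 2 ^ lg ((x 1 1).1)))) =
        an A (ci (x 1 1)) * ((x 1 1).1 + 2 - 2 ^ lg ((x 1 1).1)) +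
        an A (ci (x 1 1)) * (((x 2 1).1 + 2 - 2 ^ lg ((x 1 1).1)) -
          ((x 1 1).1 + 2 - 2 ^ lg ((x 1 1).1))) := by
      ring
    omega
  set g := ((x 2 1).1 + 2 - 2 ^ lg ((x 1 1).1)) - ((x 1 1).1 + 2 - 2 ^ lg ((x 1 1).1)) with hgdef
  have hgpos : 0 < g := by
    rcases Nat.eq_zero_or_pos g with h0 | h
    · rw [h0, Nat.mul_zero] at hg
      omega
    · exact h
  -- coordinate formulas
  have hF1 : ∀ s t : ℕ, 1 ≤ s → s ≤ k + 2 → 1 ≤ t → t ≤ k + 2 →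
      (x s t).1 = (x 1 1).1 + g * (s - 1) := by
    intro s t h1 h2 h3 h4
    have hs := hE1 s t h1 h2 h3 h4
    have hgm : γ * s = γ * 1 + γ * (s - 1) := by
      have hss : s = 1 + (s - 1) := by omega
      calc γ * s = γ * (1 + (s - 1)) := by rw [← hss]
        _ = γ * 1 + γ * (s - 1) := by ring
    have hg4 : γ * (s - 1) = an A (ci (x 1 1)) * (g * (s - 1)) := by
      rw [hg]
      ring
    have hg5 : an A (ci (x 1 1)) * (((x 1 1).1 + 2 - 2 ^ lg ((x 1 1).1)) + g * (s - 1)) =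
        an A (ci (x 1 1)) * ((x 1 1).1 + 2 - 2 ^ lg ((x 1 1).1)) +
        an A (ci (x 1 1)) * (g * (s - 1)) := by
      ring
    have hIst : an A (ci (x 1 1)) * ((x s t).1 + 2 - 2 ^ lg ((x 1 1).1)) =
        an A (ci (x 1 1)) * (((x 1 1).1 + 2 - 2 ^ lg ((x 1 1).1)) + g * (s - 1)) := by
      omega
    have hI := Nat.eq_of_mul_eq_mul_left hβ hIst
    have hb1 : 2 ^ lg ((x 1 1).1) ≤ (x s t).1 + 1 := by
      rw [← (hlgeq s t h1 h2 h3 h4).1]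
      exact lg_le _
    have hb2 : 2 ^ lg ((x 1 1).1) ≤ (x 1 1).1 + 1 := lg_le _
    omega
  have hF2 : ∀ s t : ℕ, 1 ≤ s → s ≤ k + 2 → 1 ≤ t → t ≤ k + 2 →
      (x s t).2 = (x 1 1).2 + g * (t - 1) := by
    intro s t h1 h2 h3 h4
    have hs := hE2 s t h1 h2 h3 h4
    have h11' := hE2 1 1 (le_refl _) hone (le_refl _) hone
    have hgm : γ * t = γ * 1 + γ * (t - 1) := by
      have hss : t = 1 + (t - 1) := by omega
      calc γ * t = γ * (1 + (t - 1)) := by rw [← hss]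
        _ = γ * 1 + γ * (t - 1) := by ring
    have hg4 : γ * (t - 1) = an A (ci (x 1 1)) * (g * (t - 1)) := by
      rw [hg]
      ring
    have hg5 : an A (ci (x 1 1)) * (((x 1 1).2 + 2 - 2 ^ lg ((x 1 1).2)) + g * (t - 1)) =
        an A (ci (x 1 1)) * ((x 1 1).2 + 2 - 2 ^ lg ((x 1 1).2)) +
        an A (ci (x 1 1)) * (g * (t - 1)) := by
      ring
    have hIst : an A (ci (x 1 1)) * ((x s t).2 + 2 - 2 ^ lg ((x 1 1).2)) =
        an A (ci (x 1 1)) * (((x 1 1).2 + 2 - 2 ^ lg ((x 1 1).2)) + g * (t - 1)) := by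
      omega
    have hI := Nat.eq_of_mul_eq_mul_left hβ hIst
    have hb1 : 2 ^ lg ((x 1 1).2) ≤ (x s t).2 + 1 := by
      rw [← (hlgeq s t h1 h2 h3 h4).2]
      exact lg_le _
    have hb2 : 2 ^ lg ((x 1 1).2) ≤ (x 1 1).2 + 1 := lg_le _
    omega
  refine ⟨x 1 1, g, hgpos, ?_⟩
  intro p hp
  obtain ⟨d, e, hd1, hd2, he1, he2, rfl⟩ := mem_gset.mp hp
  have hm := (hx (d + 1) (e + 1) (by omega) (by omega) (by omega) (by omega)).1
  have hc1 := hF1 (d + 1) (e + 1) (by omega) (by omega) (by omega) (by omega)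
  have hc2 := hF2 (d + 1) (e + 1) (by omega) (by omega) (by omega) (by omega)
  have hxeq : x (d + 1) (e + 1) = (((x 1 1).1 + g * d, (x 1 1).2 + g * e) : ℕ × ℕ) := by
    apply Prod.ext
    · rw [hc1, Nat.add_sub_cancel]
    · rw [hc2, Nat.add_sub_cancel]
  rw [← hxeq]
  exact hm

lemma uu_biinv {A : Set (ℕ × ℕ)} (hA : rich A) (D : Set (ℕ × ℕ)) :
    uu A '' D ∈ Gallai2 ↔ D ∈ Gallai2 := by
  constructor
  · intro h
    by_contra hD
    exact (not_mem_iff_rich.mpr (uu_fwd hA (not_mem_iff_rich.mp hD))) h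
  · intro h
    by_contra hIm
    exact (not_mem_iff_rich.mpr (uu_rev hA (not_mem_iff_rich.mp hIm))) h

noncomputable def Zset (A : Set (ℕ × ℕ)) : Set (ℕ × ℕ) :=
  ⋃ n, (uu A)^[n] '' (Set.univ \ A)

open Classical in
noncomputable def sb (A : Set (ℕ × ℕ)) (p : ℕ × ℕ) : ℕ × ℕ :=
  if p ∈ Zset A then uu A p else p

lemma Z_sub (A : Set (ℕ × ℕ)) : Set.univ \ A ⊆ Zset A := by
  intro p hp
  rw [Zset, Set.mem_iUnion]
  exact ⟨0, by simpa using hp⟩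

lemma Z_step (A : Set (ℕ × ℕ)) {p : ℕ × ℕ} (hp : p ∈ Zset A) : uu A p ∈ Zset A := by
  rw [Zset, Set.mem_iUnion] at hp
  obtain ⟨n, x, hx, hxe⟩ := hp
  rw [Zset, Set.mem_iUnion]
  refine ⟨n + 1, x, hx, ?_⟩
  rw [Function.iterate_succ_apply', hxe]

lemma sb_eq_of_mem {A : Set (ℕ × ℕ)} {p : ℕ × ℕ} (hp : p ∈ Zset A) : sb A p = uu A p := by
  rw [sb, if_pos hp]

lemma sb_eq_of_not_mem {A : Set (ℕ × ℕ)} {p : ℕ × ℕ} (hp : p ∉ Zset A) : sb A p = p := by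
  rw [sb, if_neg hp]

lemma sb_spec {A : Set (ℕ × ℕ)} (hA : rich A) :
    (∀ p, sb A p ∈ A) ∧ Function.Injective (sb A) ∧ (∀ y ∈ A, ∃ p, sb A p = y) ∧
      (∀ D : Set (ℕ × ℕ), sb A '' D = uu A '' (D ∩ Zset A) ∪ (D \ Zset A)) := by
  refine ⟨?_, ?_, ?_, ?_⟩
  · intro p
    by_cases hp : p ∈ Zset A
    · rw [sb_eq_of_mem hp]
      exact uu_mem hA p
    · rw [sb_eq_of_not_mem hp]
      by_contra hpa
      exact hp (Z_sub A ⟨trivial, hpa⟩)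
  · intro p q h
    by_cases hp : p ∈ Zset A <;> by_cases hq : q ∈ Zset A
    · rw [sb_eq_of_mem hp, sb_eq_of_mem hq] at h
      exact uu_inj hA h
    · rw [sb_eq_of_mem hp, sb_eq_of_not_mem hq] at h
      exact absurd (h ▸ Z_step A hp) hq
    · rw [sb_eq_of_not_mem hp, sb_eq_of_mem hq] at h
      exact absurd (h ▸ Z_step A hq) hp
    · rw [sb_eq_of_not_mem hp, sb_eq_of_not_mem hq] at h
      exact h
  · intro y hy
    by_cases hyZ : y ∈ Zset A
    · rw [Zset, Set.mem_iUnion] at hyZ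
      obtain ⟨n, x, hx, hxe⟩ := hyZ
      cases n with
      | zero =>
        exfalso
        simp only [Function.iterate_zero, id] at hxe
        rw [← hxe] at hy
        exact hx.2 hy
      | succ m =>
        rw [Function.iterate_succ_apply'] at hxe
        refine ⟨(uu A)^[m] x, ?_⟩
        have hpre : (uu A)^[m] x ∈ Zset A := by
          rw [Zset, Set.mem_iUnion]
          exact ⟨m, x, hx, rfl⟩
        rw [sb_eq_of_mem hpre]
        exact hxe
    · exact ⟨y, sb_eq_of_not_mem hyZ⟩
  · intro D
    ext y
    constructor
    · rintro ⟨x, hxD, rfl⟩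
      by_cases hx : x ∈ Zset A
      · exact Or.inl ⟨x, ⟨hxD, hx⟩, (sb_eq_of_mem hx).symm⟩
      · rw [sb_eq_of_not_mem hx]
        exact Or.inr ⟨hxD, hx⟩
    · rintro (⟨x, ⟨hxD, hxZ⟩, rfl⟩ | ⟨hyD, hyZ⟩)
      · exact ⟨x, hxD, sb_eq_of_mem hxZ⟩
      · exact ⟨y, hyD, sb_eq_of_not_mem hyZ⟩

lemma sb_biinv {A : Set (ℕ × ℕ)} (hA : rich A) (D : Set (ℕ × ℕ)) :
    sb A '' D ∈ Gallai2 ↔ D ∈ Gallai2 := by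
  have himg := (sb_spec hA).2.2.2 D
  have hDsplit : D = (D ∩ Zset A) ∪ (D \ Zset A) := by
    ext p
    by_cases hp : p ∈ Zset A <;> simp [hp] <;> tauto
  constructor
  · intro h
    rw [himg] at h
    have h1 : uu A '' (D ∩ Zset A) ∈ Gallai2 := downward h Set.subset_union_left
    have h2 : D \ Zset A ∈ Gallai2 := downward h Set.subset_union_right
    have h3 : D ∩ Zset A ∈ Gallai2 := (uu_biinv hA _).mp h1
    rw [hDsplit]
    exact union_mem h3 h2
  · intro h
    rw [himg]
    apply union_mem
    · exact (uu_biinv hA _).mpr (downward h Set.inter_subset_left)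
    · exact downward h Set.diff_subset

lemma restr_univ : restr Gallai2 Set.univ = Gallai2 := by
  ext C
  constructor
  · rintro ⟨B, hB, rfl⟩
    rw [Set.inter_univ]
    exact hB
  · intro h
    exact ⟨C, h, (Set.inter_univ C).symm⟩

lemma restr_self_iff {A C : Set (ℕ × ℕ)} (hC : C ⊆ A) :
    C ∈ restr Gallai2 A ↔ C ∈ Gallai2 := by
  constructor
  · rintro ⟨B, hB, rfl⟩
    exact downward hB Set.inter_subset_left
  · intro h
    exact ⟨C, h, (Set.inter_eq_self_of_subset_left hC).symm⟩

lemma pos_mem_HF {A : Set (ℕ × ℕ)} (hA : A ∉ Gallai2) : A ∈ HF Gallai2 := by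
  have hR : rich A := not_mem_iff_rich.mp hA
  obtain ⟨hmaps, hinj, hsurj, himg⟩ := sb_spec hR
  refine ⟨sb A, ⟨fun p _ => hmaps p, fun p _ q _ h => hinj h, fun y hy => ?_⟩, ?_⟩
  · obtain ⟨p, hp⟩ := hsurj y hy
    exact ⟨p, trivial, hp⟩
  · intro C hC
    rw [restr_self_iff hC, Set.univ_inter, restr_univ]
    have hCr : sb A '' (sb A ⁻¹' C) = C := by
      apply Set.image_preimage_eq_of_subset
      intro y hy
      obtain ⟨p, hp⟩ := hsurj y (hC hy)
      exact ⟨p, hp⟩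
    have := sb_biinv hR (sb A ⁻¹' C)
    rw [hCr] at this
    exact this

lemma HF_sub {A : Set (ℕ × ℕ)} (h : A ∈ HF Gallai2) : A ∉ Gallai2 := by
  obtain ⟨f, hbij, hiff⟩ := h
  intro hA
  have h1 : A ∈ restr Gallai2 A := ⟨A, hA, (Set.inter_self A).symm⟩
  have h2 := (hiff A (subset_refl A)).mp h1
  have h3 : Set.univ ∩ f ⁻¹' A = Set.univ := by
    ext p
    simp only [Set.mem_inter_iff, Set.mem_univ, true_and, Set.mem_preimage, iff_true]
    exact hbij.1 trivial
  rw [h3, restr_univ] at h2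
  exact univ_not_mem h2

lemma isIdeal : IsIdeal Gallai2 :=
  ⟨fun _ _ hA h => downward hA h, fun _ _ hA hB => union_mem hA hB,
   fun _ h => finite_mem h, univ_not_mem⟩

lemma homog : HomogIdeal Gallai2 := by
  unfold HomogIdeal
  ext A
  simp only [Set.mem_setOf_eq]
  exact ⟨fun h => HF_sub h, fun h => pos_mem_HF h⟩

end G2x

/-- the Gallai ideal `G₂` is a homogeneous ideal. -/
theorem stmt_6 : IsIdeal Gallai2 ∧ HomogIdeal Gallai2 := ⟨G2x.isIdeal, G2x.homog⟩
end

section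
/- If I and J are homogeneous ideals on ω, then their product I ⊗ J, the ideal on ω×ω defined by A ∈ I⊗J if and only if {x ∈ ω : A_x ∉ J} ∈ I, where A_x = {y ∈ ω : (x,y) ∈ A}, is homogeneous. -/
open Set Filter

/-- The Fubini product `I ⊗ J`. -/
def prodIdeal (I J : Set (Set ℕ)) : Set (Set (ℕ × ℕ)) :=
  {A | {x : ℕ | {y : ℕ | (x, y) ∈ A} ∉ J} ∈ I}

lemma equiv_of_cinf {α β : Type*} [Countable α] [Countable β] [Infinite α] [Infinite β] :
    Nonempty (α ≃ β) := by
  obtain ⟨da⟩ := nonempty_denumerable α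
  obtain ⟨db⟩ := nonempty_denumerable β
  exact ⟨(Denumerable.eqv α).trans (Denumerable.eqv β).symm⟩


lemma mem_restr_iff {X : Type*} {K : Set (Set X)}
    (hdc : ∀ A B : Set X, A ∈ K → B ⊆ A → B ∈ K) {C D : Set X} :
    C ∈ restr K D ↔ C ∈ K ∧ C ⊆ D := by
  constructor
  · rintro ⟨B, hB, rfl⟩
    exact ⟨hdc B _ hB inter_subset_left, inter_subset_right⟩
  · rintro ⟨hC, hCD⟩
    exact ⟨C, hC, (inter_eq_left.mpr hCD).symm⟩

lemma restr_univ {X : Type*} (K : Set (Set X)) : restr K univ = K := by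
  ext C
  constructor
  · rintro ⟨B, hB, rfl⟩; simpa using hB
  · intro h; exact ⟨C, h, by simp⟩

lemma riso_univ_iff {X : Type*} {K : Set (Set X)}
    (hdc : ∀ A B : Set X, A ∈ K → B ⊆ A → B ∈ K) {A : Set X} :
    RIso K A univ ↔ ∃ f : X → X, Set.BijOn f univ A ∧
      ∀ C : Set X, C ⊆ A → (C ∈ K ↔ f ⁻¹' C ∈ K) := by
  unfold RIso
  refine exists_congr fun f => and_congr_right fun hf => forall_congr' fun C =>
    forall_congr' fun hCA => ?_
  rw [mem_restr_iff hdc, restr_univ, univ_inter, and_iff_left hCA]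


/-- Column lemma. Given a good bijection `h : ℕ → P` and `Q ∈ J`, build
`β : ℕ → ℕ ⊕ ℕ` bijecting onto `inl '' P ∪ inr '' Q` with the preimage property. -/
lemma col {J : Set (Set ℕ)} (hJ : IsIdeal J) {P Q : Set ℕ}
    (hP : P ∉ J) (hQ : Q ∈ J)
    (h : ℕ → ℕ) (hhb : Set.BijOn h univ P)
    (hh : ∀ C : Set ℕ, C ⊆ P → (C ∈ J ↔ h ⁻¹' C ∈ J)) :
    ∃ β : ℕ → ℕ ⊕ ℕ, Set.BijOn β univ (Sum.inl '' P ∪ Sum.inr '' Q) ∧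
      ∀ T : Set (ℕ ⊕ ℕ), (β ⁻¹' T ∈ J ↔ Sum.inl ⁻¹' T ∩ P ∈ J) := by
  classical
  obtain ⟨hdc, hun, hfin, huniv⟩ := hJ
  by_cases hcase : ∃ E ∈ J, E.Infinite
  · -- case A : J has an infinite member E
    obtain ⟨E, hEJ, hEinf⟩ := hcase
    have hEinf' : Infinite ↥E := Set.infinite_coe_iff.mpr hEinf
    have hhinj : Function.Injective h := fun a b hab =>
      hhb.injOn (mem_univ a) (mem_univ b) hab
    have hhEinf : (h '' E).Infinite := hEinf.image (hhinj.injOn)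
    set T' : Set (ℕ ⊕ ℕ) := Sum.inl '' (h '' E) ∪ Sum.inr '' Q with hT'
    have hT'inf : T'.Infinite :=
      (hhEinf.image (Sum.inl_injective.injOn)).mono subset_union_left
    have : Infinite ↥T' := Set.infinite_coe_iff.mpr hT'inf
    obtain ⟨ψ⟩ := equiv_of_cinf (α := ↥E) (β := ↥T')
    set β : ℕ → ℕ ⊕ ℕ := fun m => if hm : m ∈ E then (ψ ⟨m, hm⟩ : ℕ ⊕ ℕ) else Sum.inl (h m)
      with hβ
    have hβE : ∀ m (hm : m ∈ E), β m = (ψ ⟨m, hm⟩ : ℕ ⊕ ℕ) := by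
      intro m hm; simp [hβ, hm]
    have hβE' : ∀ m, m ∉ E → β m = Sum.inl (h m) := by
      intro m hm; simp [hβ, hm]
    have bij1 : Set.BijOn β E T' := by
      refine ⟨?_, ?_, ?_⟩
      · intro m hm; rw [hβE m hm]; exact (ψ ⟨m, hm⟩).2
      · intro a ha b hb hab
        rw [hβE a ha, hβE b hb] at hab
        have := ψ.injective (Subtype.ext hab)
        exact congrArg Subtype.val this
      · intro v hv
        refine ⟨(ψ.symm ⟨v, hv⟩ : ↥E), (ψ.symm ⟨v, hv⟩).2, ?_⟩
        rw [hβE _ (ψ.symm ⟨v, hv⟩).2]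
        simp
    have bij2 : Set.BijOn β Eᶜ (Sum.inl '' (P \ h '' E)) := by
      refine ⟨?_, ?_, ?_⟩
      · intro m hm
        rw [hβE' m hm]
        refine ⟨h m, ⟨hhb.mapsTo (mem_univ m), ?_⟩, rfl⟩
        rintro ⟨m', hm', hmm⟩
        exact hm (by rwa [hhinj hmm] at hm')
      · intro a ha b hb hab
        rw [hβE' a ha, hβE' b hb] at hab
        exact hhinj (Sum.inl_injective hab)
      · rintro v ⟨z, ⟨hzP, hzE⟩, rfl⟩
        obtain ⟨m, -, rfl⟩ := hhb.surjOn hzP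
        refine ⟨m, fun hm => hzE ⟨m, hm, rfl⟩, ?_⟩
        rw [hβE' m (fun hm => hzE ⟨m, hm, rfl⟩)]
    have hdisj : ∀ a ∈ E, ∀ b ∈ Eᶜ, β a ≠ β b := by
      intro a ha b hb hab
      have h1 : β a ∈ T' := bij1.mapsTo ha
      have h2 : β b ∈ Sum.inl '' (P \ h '' E) := bij2.mapsTo hb
      obtain ⟨w, hw, hwb⟩ := h2
      rw [hab, ← hwb] at h1
      rcases h1 with ⟨z, hz, hzb⟩ | ⟨z, hz, hzb⟩
      · exact hw.2 ((Sum.inl_injective hzb) ▸ hz)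
      · exact (Sum.inr_ne_inl hzb)
    have hbij : Set.BijOn β univ (Sum.inl '' P ∪ Sum.inr '' Q) := by
      have := bij1.union bij2 ?_
      · have he : E ∪ Eᶜ = univ := union_compl_self E
        have ht : T' ∪ Sum.inl '' (P \ h '' E) = Sum.inl '' P ∪ Sum.inr '' Q := by
          rw [hT']
          have : Sum.inl '' (h '' E) ∪ Sum.inr '' Q ∪ Sum.inl '' (P \ h '' E)
              = (Sum.inl '' (h '' E) ∪ Sum.inl '' (P \ h '' E)) ∪ Sum.inr '' Q := by
            ac_rfl
          rw [this, ← image_union, union_diff_cancel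
            (by rintro z ⟨m, -, rfl⟩; exact hhb.mapsTo (mem_univ m))]
        rwa [he, ht] at this
      · intro a _ b _ hab
        by_cases ha : a ∈ E <;> by_cases hb : b ∈ E
        · rw [hβE a ha, hβE b hb] at hab
          exact congrArg Subtype.val (ψ.injective (Subtype.ext hab))
        · exact absurd hab (hdisj a ha b hb)
        · exact absurd hab.symm (hdisj b hb a ha)
        · rw [hβE' a ha, hβE' b hb] at hab
          exact hhinj (Sum.inl_injective hab)
    refine ⟨β, hbij, ?_⟩
    intro T
    set C := Sum.inl ⁻¹' T ∩ P with hC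
    have key : β ⁻¹' T \ E = h ⁻¹' C \ E := by
      ext m
      simp only [mem_diff, mem_preimage]
      constructor
      · rintro ⟨hmT, hmE⟩
        rw [hβE' m hmE] at hmT
        exact ⟨⟨hmT, hhb.mapsTo (mem_univ m)⟩, hmE⟩
      · rintro ⟨⟨hmT, -⟩, hmE⟩
        exact ⟨by rw [hβE' m hmE]; exact hmT, hmE⟩
    constructor
    · intro hT
      have h1 : h ⁻¹' C \ E ∈ J := by
        rw [← key]; exact hdc _ _ hT diff_subset
      have hsub : h ⁻¹' C ⊆ (h ⁻¹' C \ E) ∪ E := by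
        intro m hm
        by_cases hmE : m ∈ E
        · exact Or.inr hmE
        · exact Or.inl ⟨hm, hmE⟩
      have h2 : h ⁻¹' C ∈ J := hdc _ _ (hun _ _ h1 hEJ) hsub
      exact (hh C inter_subset_right).mpr h2
    · intro hCJ
      have h2 : h ⁻¹' C ∈ J := (hh C inter_subset_right).mp hCJ
      have hsub : β ⁻¹' T ⊆ (h ⁻¹' C \ E) ∪ E := by
        intro m hm
        by_cases hmE : m ∈ E
        · exact Or.inr hmE
        · have hx : m ∈ β ⁻¹' T \ E := ⟨hm, hmE⟩
          rw [key] at hx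
          exact Or.inl hx
      exact hdc _ _ (hun _ _ (hdc _ _ h2 diff_subset) hEJ) hsub
  · -- case B : all members of J are finite, so J = Fin
    push_neg at hcase
    have hJfin : ∀ E : Set ℕ, E ∈ J ↔ E.Finite := fun E =>
      ⟨fun h => hcase E h, hfin E⟩
    have hQfin : Q.Finite := (hJfin Q).mp hQ
    have hPinf : P.Infinite := by
      intro hPfin
      exact hP ((hJfin P).mpr hPfin)
    set Tg : Set (ℕ ⊕ ℕ) := Sum.inl '' P ∪ Sum.inr '' Q with hTg
    have hTginf : Tg.Infinite := (hPinf.image (Sum.inl_injective.injOn)).mono subset_union_left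
    have : Infinite ↥Tg := Set.infinite_coe_iff.mpr hTginf
    obtain ⟨e⟩ := equiv_of_cinf (α := ℕ) (β := ↥Tg)
    set β : ℕ → ℕ ⊕ ℕ := fun m => (e m : ℕ ⊕ ℕ) with hβ
    have hβinj : Function.Injective β := fun a b hab =>
      e.injective (Subtype.ext hab)
    have hβrange : range β = Tg := by
      ext v
      constructor
      · rintro ⟨m, rfl⟩; exact (e m).2
      · intro hv
        exact ⟨e.symm ⟨v, hv⟩, by simp [hβ]⟩
    have hbij : Set.BijOn β univ Tg := by
      refine ⟨fun m _ => (e m).2, hβinj.injOn, ?_⟩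
      intro v hv
      exact ⟨e.symm ⟨v, hv⟩, mem_univ _, by simp [hβ]⟩
    refine ⟨β, hbij, ?_⟩
    intro T
    rw [hJfin, hJfin]
    have h1 : β ⁻¹' T = β ⁻¹' (T ∩ Tg) := by
      ext m
      simp only [mem_preimage, mem_inter_iff]
      exact ⟨fun h => ⟨h, hβrange ▸ mem_range_self m⟩, fun h => h.1⟩
    have h2 : T ∩ Tg = Sum.inl '' (Sum.inl ⁻¹' T ∩ P) ∪ Sum.inr '' (Sum.inr ⁻¹' T ∩ Q) := by
      rw [hTg, inter_union_distrib_left]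
      congr 1
      · ext v; constructor
        · rintro ⟨hvT, z, hz, rfl⟩; exact ⟨z, ⟨hvT, hz⟩, rfl⟩
        · rintro ⟨z, ⟨hvT, hz⟩, rfl⟩; exact ⟨hvT, z, hz, rfl⟩
      · ext v; constructor
        · rintro ⟨hvT, z, hz, rfl⟩; exact ⟨z, ⟨hvT, hz⟩, rfl⟩
        · rintro ⟨z, ⟨hvT, hz⟩, rfl⟩; exact ⟨hvT, z, hz, rfl⟩
    constructor
    · intro hfinT
      have himg : β '' (β ⁻¹' T) = T ∩ Tg := by
        rw [image_preimage_eq_inter_range, hβrange]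
      have hTTg : (T ∩ Tg).Finite := himg ▸ hfinT.image β
      rw [h2] at hTTg
      exact Set.Finite.of_finite_image (hTTg.subset subset_union_left)
        (Sum.inl_injective.injOn)
    · intro hCfin
      rw [h1, h2]
      refine Set.Finite.preimage (hβinj.injOn) ?_
      exact (hCfin.image _).union (((hQfin.subset inter_subset_right).image _))

/-- the product of homogeneous ideals is homogeneous. -/
theorem stmt_7 (I J : Set (Set ℕ)) (hI : IsIdeal I) (hJ : IsIdeal J)
    (hIh : HomogIdeal I) (hJh : HomogIdeal J) :
    HomogIdeal (prodIdeal I J) := by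
  classical
  have hPdc : ∀ A B : Set (ℕ × ℕ), A ∈ prodIdeal I J → B ⊆ A → B ∈ prodIdeal I J := by
    intro A B hA hBA
    refine hI.1 _ _ hA ?_
    intro x hx
    simp only [mem_setOf_eq] at hx ⊢
    intro hAx
    exact hx (hJ.1 _ _ hAx (fun y hy => hBA hy))
  have hPuniv : (univ : Set (ℕ × ℕ)) ∉ prodIdeal I J := by
    intro hc
    have heq : {x : ℕ | {y : ℕ | (x, y) ∈ (univ : Set (ℕ × ℕ))} ∉ J} = univ := by
      ext x
      refine ⟨fun _ => mem_univ x, fun _ => ?_⟩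
      show {y : ℕ | (x, y) ∈ (univ : Set (ℕ × ℕ))} ∉ J
      have h3 : {y : ℕ | (x, y) ∈ (univ : Set (ℕ × ℕ))} = univ := by ext y; simp
      rw [h3]; exact hJ.2.2.2
    exact hI.2.2.2 (heq ▸ hc)
  unfold HomogIdeal
  ext A
  simp only [HF, mem_setOf_eq]
  constructor
  · -- RIso → positive
    intro hA hAK
    rw [riso_univ_iff hPdc] at hA
    obtain ⟨f, hfb, hfp⟩ := hA
    have hfA : f ⁻¹' A = univ := eq_univ_of_forall fun p => hfb.mapsTo (mem_univ p)
    exact hPuniv (hfA ▸ (hfp A Subset.rfl).mp hAK)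
  · -- positive → RIso
    intro hA
    rw [riso_univ_iff hPdc]
    set S : Set ℕ := {x | {y | (x, y) ∈ A} ∉ J} with hSdef
    have hSI : S ∉ I := hA
    have hSinf : S.Infinite := fun hfin => hSI (hI.2.2.1 S hfin)
    -- bijection g : ℕ → S
    obtain ⟨g, hgb, hgp⟩ := (riso_univ_iff hI.1).mp
      (show S ∈ HF I by rw [hIh]; exact hSI)
    -- injection σ : ℕ → S
    set σ : ℕ → ℕ := fun x => ((Set.Infinite.natEmbedding S hSinf) x : ℕ) with hσdef
    have hσinj : Function.Injective σ := fun a b hab =>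
      (Set.Infinite.natEmbedding S hSinf).injective (Subtype.ext hab)
    have hσS : ∀ x, σ x ∈ S := fun x => ((Set.Infinite.natEmbedding S hSinf) x).2
    set t : ℕ → ℕ := Function.invFun σ with htdef
    have htσ : ∀ x, t (σ x) = x := Function.leftInverse_invFun hσinj
    set Q : ℕ → Set ℕ := fun x' =>
      if x' ∈ σ '' Sᶜ then {y | (t x', y) ∈ A} else ∅ with hQdef
    have hQeq : ∀ x ∈ Sᶜ, Q (σ x) = {y | (x, y) ∈ A} := by
      intro x hx
      have hm : σ x ∈ σ '' Sᶜ := ⟨x, hx, rfl⟩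
      simp only [hQdef, if_pos hm, htσ x]
    have hQJ : ∀ x', Q x' ∈ J := by
      intro x'
      by_cases hm : x' ∈ σ '' Sᶜ
      · obtain ⟨x, hx, rfl⟩ := hm
        rw [hQeq x hx]
        exact not_not.mp hx
      · simp only [hQdef, if_neg hm]
        exact hJ.2.2.1 ∅ finite_empty
    have hQne : ∀ x', (Q x').Nonempty → x' ∈ σ '' Sᶜ := by
      intro x' hne
      by_contra hm
      simp only [hQdef, if_neg hm] at hne
      exact hne.ne_empty rfl
    have hts : ∀ x' ∈ σ '' Sᶜ, t x' ∈ Sᶜ ∧ σ (t x') = x' := by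
      rintro x' ⟨x, hx, rfl⟩
      rw [htσ x]
      exact ⟨hx, rfl⟩
    -- column bijections
    have hβex : ∀ x' : ℕ, ∃ β : ℕ → ℕ ⊕ ℕ, x' ∈ S →
        (Set.BijOn β univ (Sum.inl '' {y | (x', y) ∈ A} ∪ Sum.inr '' Q x') ∧
         ∀ T : Set (ℕ ⊕ ℕ), (β ⁻¹' T ∈ J ↔ Sum.inl ⁻¹' T ∩ {y | (x', y) ∈ A} ∈ J)) := by
      intro x'
      by_cases hx' : x' ∈ S
      · have hP : {y | (x', y) ∈ A} ∉ J := hx'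
        obtain ⟨h, hhb, hh⟩ := (riso_univ_iff hJ.1).mp
          (show {y | (x', y) ∈ A} ∈ HF J by rw [hJh]; exact hP)
        obtain ⟨β, h1, h2⟩ := col hJ hP (hQJ x') h hhb hh
        exact ⟨β, fun _ => ⟨h1, h2⟩⟩
      · exact ⟨fun _ => Sum.inl 0, fun h => absurd h hx'⟩
    choose β hβ using hβex
    set ι : ℕ → ℕ ⊕ ℕ → ℕ × ℕ :=
      fun x' v => Sum.elim (fun y => (x', y)) (fun y => (t x', y)) v with hιdef
    refine ⟨fun p => ι (g p.1) (β (g p.1) p.2), ⟨?_, ?_, ?_⟩, ?_⟩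
    · -- MapsTo
      rintro ⟨n, m⟩ -
      have hx' : g n ∈ S := hgb.mapsTo (mem_univ n)
      have hv := (hβ (g n) hx').1.mapsTo (mem_univ m)
      rcases hv with ⟨y, hy, hvy⟩ | ⟨y, hy, hvy⟩
      · show ι (g n) (β (g n) m) ∈ A
        rw [← hvy]
        exact hy
      · show ι (g n) (β (g n) m) ∈ A
        rw [← hvy]
        have hmem : g n ∈ σ '' Sᶜ := hQne _ ⟨y, hy⟩
        obtain ⟨x, hx, hxe⟩ := hmem
        rw [← hxe] at hy ⊢
        rw [hQeq x hx] at hy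
        show (t (σ x), y) ∈ A
        rw [htσ x]
        exact hy
    · -- InjOn
      rintro ⟨n₁, m₁⟩ - ⟨n₂, m₂⟩ - hfe
      have hx₁ : g n₁ ∈ S := hgb.mapsTo (mem_univ n₁)
      have hx₂ : g n₂ ∈ S := hgb.mapsTo (mem_univ n₂)
      have hv₁ := (hβ (g n₁) hx₁).1.mapsTo (mem_univ m₁)
      have hv₂ := (hβ (g n₂) hx₂).1.mapsTo (mem_univ m₂)
      have hcols : g n₁ = g n₂ ∧ β (g n₁) m₁ = β (g n₂) m₂ := by
        rcases hv₁ with ⟨y₁, hy₁, hvy₁⟩ | ⟨y₁, hy₁, hvy₁⟩ <;>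
          rcases hv₂ with ⟨y₂, hy₂, hvy₂⟩ | ⟨y₂, hy₂, hvy₂⟩
        · -- inl / inl
          change ι (g n₁) (β (g n₁) m₁) = ι (g n₂) (β (g n₂) m₂) at hfe
          rw [← hvy₁, ← hvy₂] at hfe
          have h1 : ((g n₁ : ℕ), y₁) = ((g n₂ : ℕ), y₂) := hfe
          rw [Prod.mk.injEq] at h1
          exact ⟨h1.1, by rw [← hvy₁, ← hvy₂, h1.2]⟩
        · -- inl / inr : impossible
          change ι (g n₁) (β (g n₁) m₁) = ι (g n₂) (β (g n₂) m₂) at hfe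
          rw [← hvy₁, ← hvy₂] at hfe
          have h1 : ((g n₁ : ℕ), y₁) = (t (g n₂), y₂) := hfe
          rw [Prod.mk.injEq] at h1
          have hc := (hts _ (hQne _ ⟨y₂, hy₂⟩)).1
          rw [← h1.1] at hc
          exact absurd hx₁ hc
        · -- inr / inl : impossible
          change ι (g n₁) (β (g n₁) m₁) = ι (g n₂) (β (g n₂) m₂) at hfe
          rw [← hvy₁, ← hvy₂] at hfe
          have h1 : (t (g n₁), y₁) = ((g n₂ : ℕ), y₂) := hfe
          rw [Prod.mk.injEq] at h1
          have hc := (hts _ (hQne _ ⟨y₁, hy₁⟩)).1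
          rw [h1.1] at hc
          exact absurd hx₂ hc
        · -- inr / inr
          change ι (g n₁) (β (g n₁) m₁) = ι (g n₂) (β (g n₂) m₂) at hfe
          rw [← hvy₁, ← hvy₂] at hfe
          have h1 : (t (g n₁), y₁) = (t (g n₂), y₂) := hfe
          rw [Prod.mk.injEq] at h1
          have hs₁ := (hts _ (hQne _ ⟨y₁, hy₁⟩)).2
          have hs₂ := (hts _ (hQne _ ⟨y₂, hy₂⟩)).2
          have hgg : g n₁ = g n₂ := by rw [← hs₁, ← hs₂, h1.1]
          refine ⟨hgg, ?_⟩
          rw [← hvy₁, ← hvy₂, h1.2]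
      have hn : n₁ = n₂ := hgb.injOn (mem_univ n₁) (mem_univ n₂) hcols.1
      subst hn
      have hm : m₁ = m₂ := (hβ (g n₁) hx₁).1.injOn (mem_univ m₁) (mem_univ m₂) hcols.2
      rw [hm]
    · -- SurjOn
      rintro ⟨x, y⟩ hxy
      by_cases hx : x ∈ S
      · obtain ⟨n, -, hn⟩ := hgb.surjOn hx
        have hmem : Sum.inl y ∈ Sum.inl '' {y | (x, y) ∈ A} ∪ Sum.inr '' Q x :=
          Or.inl ⟨y, hxy, rfl⟩
        rw [← hn] at hmem hx
        obtain ⟨m, -, hm⟩ := (hβ (g n) hx).1.surjOn hmem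
        refine ⟨(n, m), mem_univ _, ?_⟩
        show ι (g n) (β (g n) m) = (x, y)
        rw [hm, hn]
        rfl
      · have hx' : σ x ∈ S := hσS x
        obtain ⟨n, -, hn⟩ := hgb.surjOn hx'
        have hyQ : y ∈ Q (σ x) := by rw [hQeq x hx]; exact hxy
        have hmem : Sum.inr y ∈ Sum.inl '' {y | (σ x, y) ∈ A} ∪ Sum.inr '' Q (σ x) :=
          Or.inr ⟨y, hyQ, rfl⟩
        rw [← hn] at hmem hx'
        obtain ⟨m, -, hm⟩ := (hβ (g n) hx').1.surjOn hmem
        refine ⟨(n, m), mem_univ _, ?_⟩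
        show ι (g n) (β (g n) m) = (x, y)
        rw [hm, hn]
        show (t (σ x), y) = (x, y)
        rw [htσ x]
    · -- preimage condition
      intro C hCA
      have hcol : ∀ n : ℕ,
          ({m | ((fun p : ℕ × ℕ => ι (g p.1) (β (g p.1) p.2)) (n, m)) ∈ C} ∈ J
            ↔ {y | (g n, y) ∈ C} ∈ J) := by
        intro n
        have hx' : g n ∈ S := hgb.mapsTo (mem_univ n)
        have hkey := (hβ (g n) hx').2 (ι (g n) ⁻¹' C)
        have h2 : Sum.inl ⁻¹' (ι (g n) ⁻¹' C) ∩ {y | (g n, y) ∈ A}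
            = {y | (g n, y) ∈ C} := by
          ext y
          constructor
          · rintro ⟨h1, -⟩; exact h1
          · intro h1; exact ⟨h1, hCA h1⟩
        rw [h2] at hkey
        exact hkey
      show {x | {y | (x, y) ∈ C} ∉ J} ∈ I ↔
        {x | {y | (x, y) ∈ (fun p : ℕ × ℕ => ι (g p.1) (β (g p.1) p.2)) ⁻¹' C} ∉ J} ∈ I
      have hTsub : {x | {y | (x, y) ∈ C} ∉ J} ⊆ S := by
        intro x hx
        by_contra hxS
        exact hx (hJ.1 _ _ (not_not.mp hxS) (fun y hy => hCA hy))
      have heq : {x | {y | (x, y) ∈ (fun p : ℕ × ℕ => ι (g p.1) (β (g p.1) p.2)) ⁻¹' C} ∉ J}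
          = g ⁻¹' {x | {y | (x, y) ∈ C} ∉ J} := by
        ext n
        simp only [mem_setOf_eq, mem_preimage]
        exact not_congr (hcol n)
      rw [heq]
      exact hgp _ hTsub
end

section
/- Let X be a topological space and I a homogeneous ideal on ω. Then (a) (X,I) has the BW property if and only if (X,I) has the hBW property, and (b) (X,I) has the FinBW property if and only if (X,I) has the hFinBW property. -/
open Set Filter

/-- The subsequence `(x_n)_{n ∈ A}` is `I`-convergent to `l`. -/
def IConvOn {X : Type*} [TopologicalSpace X] (I : Set (Set ℕ)) (A : Set ℕ)
    (x : ℕ → X) (l : X) : Prop :=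
  ∀ U : Set X, IsOpen U → l ∈ U → {n ∈ A | x n ∉ U} ∈ I

/-- The subsequence `(x_n)_{n ∈ A}` is convergent to `l` (classically). -/
def ConvOn {X : Type*} [TopologicalSpace X] (A : Set ℕ) (x : ℕ → X) (l : X) : Prop :=
  ∀ U : Set X, IsOpen U → l ∈ U → {n ∈ A | x n ∉ U}.Finite

def BW (X : Type*) [TopologicalSpace X] (I : Set (Set ℕ)) : Prop :=
  ∀ x : ℕ → X, ∃ A : Set ℕ, A ∉ I ∧ ∃ l : X, IConvOn I A x l

def FinBW (X : Type*) [TopologicalSpace X] (I : Set (Set ℕ)) : Prop :=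
  ∀ x : ℕ → X, ∃ A : Set ℕ, A ∉ I ∧ ∃ l : X, ConvOn A x l

def hBW (X : Type*) [TopologicalSpace X] (I : Set (Set ℕ)) : Prop :=
  ∀ A : Set ℕ, A ∉ I → ∀ x : ℕ → X,
    ∃ B : Set ℕ, B ⊆ A ∧ B ∉ I ∧ ∃ l : X, IConvOn I B x l

def hFinBW (X : Type*) [TopologicalSpace X] (I : Set (Set ℕ)) : Prop :=
  ∀ A : Set ℕ, A ∉ I → ∀ x : ℕ → X,
    ∃ B : Set ℕ, B ⊆ A ∧ B ∉ I ∧ ∃ l : X, ConvOn B x l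

/-- for a homogeneous ideal, BW ↔ hBW and FinBW ↔ hFinBW. -/
theorem stmt_8 (X : Type*) [TopologicalSpace X] (I : Set (Set ℕ))
    (hI : IsIdeal I) (hhom : HomogIdeal I) :
    (BW X I ↔ hBW X I) ∧ (FinBW X I ↔ hFinBW X I) := by
  have hUniv : (Set.univ : Set ℕ) ∉ I := hI.2.2.2
  have hrestr_univ : restr I Set.univ = I := by
    ext C; constructor
    · rintro ⟨B, hB, rfl⟩; simpa using hB
    · intro hC; exact ⟨C, hC, (Set.inter_univ C).symm⟩
  have hrestr : ∀ (A C : Set ℕ), C ⊆ A → (C ∈ restr I A ↔ C ∈ I) := by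
    intro A C hCA
    constructor
    · rintro ⟨B, hB, rfl⟩; exact hI.1 B (B ∩ A) hB Set.inter_subset_left
    · intro hC; exact ⟨C, hC, (Set.inter_eq_left.mpr hCA).symm⟩
  have key : ∀ A : Set ℕ, A ∉ I → ∃ f : ℕ → ℕ, Function.Injective f ∧
      Set.range f = A ∧ ∀ C : Set ℕ, C ⊆ A → (C ∈ I ↔ f ⁻¹' C ∈ I) := by
    intro A hA
    have hAH : A ∈ HF I := by rw [hhom]; exact hA
    obtain ⟨f, hbij, hC⟩ := hAH
    refine ⟨f, fun a b hab => hbij.injOn (Set.mem_univ a) (Set.mem_univ b) hab, ?_, ?_⟩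
    · rw [← Set.image_univ]; exact hbij.image_eq
    · intro C hCA
      have h1 := hC C hCA
      rwa [hrestr A C hCA, Set.univ_inter, hrestr_univ] at h1
  constructor
  · constructor
    · intro hbw A hA x
      obtain ⟨f, hinj, hrange, htr⟩ := key A hA
      obtain ⟨B, hB, l, hconv⟩ := hbw (x ∘ f)
      have hsub : f '' B ⊆ A := by rw [← hrange]; exact Set.image_subset_range f B
      refine ⟨f '' B, hsub, ?_, l, ?_⟩
      · intro h
        apply hB
        have h2 := (htr (f '' B) hsub).mp h
        rwa [Function.Injective.preimage_image hinj] at h2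
      · intro U hU hlU
        have hS : {n ∈ f '' B | x n ∉ U} ⊆ A := fun n hn => hsub hn.1
        have heq : f ⁻¹' {n ∈ f '' B | x n ∉ U} = {m ∈ B | (x ∘ f) m ∉ U} := by
          ext m
          constructor
          · rintro ⟨⟨k, hk, hkm⟩, hx⟩; exact ⟨hinj hkm ▸ hk, hx⟩
          · rintro ⟨hm, hx⟩; exact ⟨⟨m, hm, rfl⟩, hx⟩
        rw [htr _ hS, heq]
        exact hconv U hU hlU
    · intro h x
      obtain ⟨B, _, hB, l, hc⟩ := h Set.univ hUniv x
      exact ⟨B, hB, l, hc⟩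
  · constructor
    · intro hbw A hA x
      obtain ⟨f, hinj, hrange, htr⟩ := key A hA
      obtain ⟨B, hB, l, hconv⟩ := hbw (x ∘ f)
      have hsub : f '' B ⊆ A := by rw [← hrange]; exact Set.image_subset_range f B
      refine ⟨f '' B, hsub, ?_, l, ?_⟩
      · intro h
        apply hB
        have h2 := (htr (f '' B) hsub).mp h
        rwa [Function.Injective.preimage_image hinj] at h2
      · intro U hU hlU
        have heq : {n ∈ f '' B | x n ∉ U} = f '' {m ∈ B | (x ∘ f) m ∉ U} := by
          ext n; constructor
          · rintro ⟨⟨m, hm, rfl⟩, hx⟩; exact ⟨m, ⟨hm, hx⟩, rfl⟩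
          · rintro ⟨m, ⟨hm, hx⟩, rfl⟩; exact ⟨⟨m, hm, rfl⟩, hx⟩
        rw [heq]
        exact (hconv U hU hlU).image f
    · intro h x
      obtain ⟨B, _, hB, l, hc⟩ := h Set.univ hUniv x
      exact ⟨B, hB, l, hc⟩
end

section
/- For any ideal I on ω the following are equivalent: (a) there exists a bi-I-invariant injection f : ω → ω with fix(f) ∉ I* (i.e., I does not satisfy condition (C1)); (b) there exist A, B ⊆ ω such that the symmetric difference A △ B ∉ I and I|A ≅ I|B. -/
open Set Filter

noncomputable def greedy (nb : ℕ → Finset ℕ) (n : ℕ) : ℕ :=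
  sInf {k | k ∉ ((nb n).filter (· < n)).attach.image (fun m => greedy nb m.1)}
termination_by n
decreasing_by exact (Finset.mem_filter.mp m.2).2

lemma greedy_mem (nb : ℕ → Finset ℕ) (n : ℕ) :
    greedy nb n ∉ ((nb n).filter (· < n)).attach.image (fun m => greedy nb m.1) := by
  rw [greedy]
  set F := ((nb n).filter (· < n)).attach.image (fun m => greedy nb m.1) with hF
  have hne : {k | k ∉ F}.Nonempty := by
    refine ⟨F.sup id + 1, fun h => ?_⟩
    have h2 : id (F.sup id + 1) ≤ F.sup id := Finset.le_sup h
    simp only [id] at h2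
    omega
  exact Nat.sInf_mem hne

lemma greedy_le (nb : ℕ → Finset ℕ) (n : ℕ) : greedy nb n ≤ (nb n).card := by
  rw [greedy]
  set F := ((nb n).filter (· < n)).attach.image (fun m => greedy nb m.1) with hF
  have hcard : F.card ≤ (nb n).card := by
    calc F.card ≤ ((nb n).filter (· < n)).attach.card := Finset.card_image_le
    _ = ((nb n).filter (· < n)).card := Finset.card_attach
    _ ≤ (nb n).card := Finset.card_filter_le _ _
  have : ∃ k ≤ F.card, k ∉ F := by
    by_contra h
    push_neg at h
    have hsub : Finset.range (F.card + 1) ⊆ F := by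
      intro k hk
      exact h k (by simpa using Nat.lt_succ_iff.mp (Finset.mem_range.mp hk))
    have := Finset.card_le_card hsub
    simp at this
  obtain ⟨k, hk1, hk2⟩ := this
  exact le_trans (Nat.sInf_le hk2) (le_trans hk1 hcard)

lemma greedy_ne (nb : ℕ → Finset ℕ) {m n : ℕ} (hmn : m < n) (hmem : m ∈ nb n) :
    greedy nb m ≠ greedy nb n := by
  intro h
  apply greedy_mem nb n
  rw [← h]
  exact Finset.mem_image.mpr ⟨⟨m, Finset.mem_filter.mpr ⟨hmem, by simpa using hmn⟩⟩,
    Finset.mem_attach _ _, rfl⟩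

lemma mem_restr_iff_s9 {I : Set (Set ℕ)} (hI : IsIdeal I) {A C : Set ℕ} (hCA : C ⊆ A) :
    C ∈ restr I A ↔ C ∈ I := by
  constructor
  · rintro ⟨B, hB, rfl⟩
    exact hI.1 B _ hB Set.inter_subset_left
  · intro hC
    exact ⟨C, hC, (Set.inter_eq_left.mpr hCA).symm⟩

lemma exists_pos_piece {I : Set (Set ℕ)} (hI : IsIdeal I) (D : Set ℕ) (hD : D ∉ I)
    (c : ℕ → ℕ) (k : ℕ) (hc : ∀ n, c n ≤ k) : ∃ i, (D ∩ c ⁻¹' {i}) ∉ I := by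
  by_contra h
  push_neg at h
  have key : ∀ m : ℕ, {x | x ∈ D ∧ c x < m} ∈ I := by
    intro m
    induction m with
    | zero =>
        have : {x : ℕ | x ∈ D ∧ c x < 0} = ∅ := by ext x; simp
        rw [this]; exact hI.2.2.1 ∅ Set.finite_empty
    | succ m ih =>
        have heq : {x | x ∈ D ∧ c x < m + 1} = {x | x ∈ D ∧ c x < m} ∪ (D ∩ c ⁻¹' {m}) := by
          ext x
          simp only [Set.mem_setOf_eq, Set.mem_union, Set.mem_inter_iff, Set.mem_preimage,
            Set.mem_singleton_iff]
          constructor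
          · rintro ⟨h1, h2⟩
            rcases Nat.lt_succ_iff_lt_or_eq.mp h2 with h | h
            · exact Or.inl ⟨h1, h⟩
            · exact Or.inr ⟨h1, h⟩
          · rintro (⟨h1, h2⟩ | ⟨h1, h2⟩)
            · exact ⟨h1, Nat.lt_succ_of_lt h2⟩
            · exact ⟨h1, h2 ▸ Nat.lt_succ_self _⟩
        rw [heq]
        exact hI.2.1 _ _ ih (h m)
  apply hD
  have : D = {x | x ∈ D ∧ c x < k + 1} := by
    ext x
    simp only [Set.mem_setOf_eq]
    exact ⟨fun hx => ⟨hx, Nat.lt_succ_of_le (hc x)⟩, fun hx => hx.1⟩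
  rw [this]; exact key (k + 1)

/-- `I` fails condition (C1) iff there are `A, B` with
`A △ B ∉ I` and `I|A ≅ I|B`. -/
theorem stmt_9 (I : Set (Set ℕ)) (hI : IsIdeal I) :
    (∃ f : ℕ → ℕ, BiInvariant I f ∧ (fixedSet f)ᶜ ∉ I) ↔
    (∃ A B : Set ℕ, symmDiff A B ∉ I ∧ RIso I A B) := by
  constructor
  · -- forward direction
    rintro ⟨f, ⟨hinj, hinvar⟩, hfix⟩
    classical
    set fi : ℕ → ℕ := fun n => if h : ∃ m, f m = n then h.choose else n with hfi
    set nb : ℕ → Finset ℕ := fun n => {f n, fi n} with hnb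
    set c : ℕ → ℕ := greedy nb with hc
    have hcle : ∀ n, c n ≤ 2 := by
      intro n
      refine le_trans (greedy_le nb n) ?_
      calc (nb n).card ≤ ({fi n} : Finset ℕ).card + 1 := Finset.card_insert_le _ _
        _ ≤ 2 := by simp
    have hproper : ∀ x, f x ≠ x → c x ≠ c (f x) := by
      intro x hx
      rcases lt_trichotomy x (f x) with h | h | h
      · have hxmem : x ∈ nb (f x) := by
          have : fi (f x) = x := by
            have he : ∃ m, f m = f x := ⟨x, rfl⟩
            rw [hfi]
            dsimp only
            rw [dif_pos he]
            exact hinj he.choose_spec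
          simp [hnb, this]
        exact greedy_ne nb h hxmem
      · exact absurd h.symm hx
      · have hmem : f x ∈ nb x := by simp [hnb]
        exact fun hcc => greedy_ne nb h hmem hcc.symm
    obtain ⟨i, hE⟩ := exists_pos_piece hI _ hfix c 2 hcle
    set E : Set ℕ := (fixedSet f)ᶜ ∩ c ⁻¹' {i} with hEdef
    have hnotfix : ∀ x ∈ E, f x ≠ x := fun x hx => hx.1
    have hdisj : ∀ x ∈ E, f x ∉ E := by
      intro x hx hfxE
      have h1 : c x = i := hx.2
      have h2 : c (f x) = i := hfxE.2
      exact hproper x (hnotfix x hx) (h1.trans h2.symm)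
    refine ⟨f '' E, E, ?_, f, ⟨Set.mapsTo_image f E, hinj.injOn, Set.surjOn_image f E⟩, ?_⟩
    · intro hsym
      apply hE
      refine hI.1 _ _ hsym ?_
      intro x hx
      rw [Set.mem_symmDiff]
      refine Or.inr ⟨hx, ?_⟩
      rintro ⟨y, hy, rfl⟩
      exact hdisj y hy hx
    · intro C hC
      rw [mem_restr_iff_s9 hI hC, mem_restr_iff_s9 hI Set.inter_subset_left]
      have himg : f '' (E ∩ f ⁻¹' C) = C := by
        apply Set.Subset.antisymm
        · rintro y ⟨x, ⟨_, hxC⟩, rfl⟩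
          exact hxC
        · intro y hy
          obtain ⟨x, hx, rfl⟩ := hC hy
          exact ⟨x, ⟨hx, hy⟩, rfl⟩
      conv_lhs => rw [← himg]
      exact hinvar _
  · -- backward direction
    rintro ⟨A, B, hD, g, hbij, hg⟩
    classical
    have hg' : ∀ C : Set ℕ, C ⊆ A → (C ∈ I ↔ B ∩ g ⁻¹' C ∈ I) := by
      intro C hC
      rw [← mem_restr_iff_s9 hI hC, ← mem_restr_iff_s9 hI (Set.inter_subset_left (s := B))]
      exact hg C hC
    have hstar : ∀ S : Set ℕ, S ⊆ B → (g '' S ∈ I ↔ S ∈ I) := by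
      intro S hS
      have h1 : g '' S ⊆ A := (Set.image_mono hS : g '' S ⊆ g '' B).trans hbij.1.image_subset
      have h2 : B ∩ g ⁻¹' (g '' S) = S := by
        apply Set.Subset.antisymm
        · rintro x ⟨hxB, s, hsS, hsx⟩
          rwa [hbij.2.1 (hS hsS) hxB hsx] at hsS
        · intro x hx
          exact ⟨hS hx, Set.mem_image_of_mem g hx⟩
      rw [hg' _ h1, h2]
    set gi : ℕ → ℕ := fun a => if h : a ∈ A then (hbij.2.2 h).choose else a with hgidef
    have hgi : ∀ a ∈ A, gi a ∈ B ∧ g (gi a) = a := by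
      intro a ha
      rw [hgidef]
      simp only [dif_pos ha]
      exact ⟨(hbij.2.2 ha).choose_spec.1, (hbij.2.2 ha).choose_spec.2⟩
    have hgiu : ∀ b ∈ B, gi (g b) = b := by
      intro b hb
      have hga : g b ∈ A := hbij.1 hb
      exact hbij.2.1 (hgi _ hga).1 hb (hgi _ hga).2
    set p : ℕ → ℕ := fun d => if d ∈ B then g d else gi d with hpdef
    set D₀ : Set ℕ := symmDiff A B with hD₀
    -- basic facts on D₀
    have hcases : ∀ d ∈ D₀, (d ∈ B ∧ d ∉ A ∧ p d = g d) ∨ (d ∈ A ∧ d ∉ B ∧ p d = gi d) := by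
      intro d hd
      rw [hD₀, Set.mem_symmDiff] at hd
      rcases hd with ⟨hA, hB⟩ | ⟨hB, hA⟩
      · exact Or.inr ⟨hA, hB, by rw [hpdef]; simp [hB]⟩
      · exact Or.inl ⟨hB, hA, by rw [hpdef]; simp [hB]⟩
    have hpne : ∀ d ∈ D₀, p d ≠ d := by
      intro d hd
      rcases hcases d hd with ⟨hB, hA, hp⟩ | ⟨hA, hB, hp⟩
      · rw [hp]; intro h; exact hA (h ▸ hbij.1 hB)
      · rw [hp]; intro h; exact hB (h ▸ (hgi d hA).1)
    set nb : ℕ → Finset ℕ := fun d => {p d, gi d, g d, gi (p d), g (p d)} with hnb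
    set c : ℕ → ℕ := greedy nb with hc
    have hcle : ∀ n, c n ≤ 5 := by
      intro n
      refine le_trans (greedy_le nb n) ?_
      rw [hnb]
      refine le_trans (Finset.card_insert_le _ _) ?_
      refine le_trans (Nat.succ_le_succ (Finset.card_insert_le _ _)) ?_
      refine le_trans (Nat.succ_le_succ (Nat.succ_le_succ (Finset.card_insert_le _ _))) ?_
      refine le_trans (Nat.succ_le_succ (Nat.succ_le_succ (Nat.succ_le_succ
        (Finset.card_insert_le _ _)))) ?_
      simp
    have hmemnb : ∀ d ∈ D₀, ∀ d' ∈ D₀, (d' = p d ∨ p d' = d ∨ p d' = p d) → d' ∈ nb d := by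
      intro d hd d' hd' hcase
      rw [hnb]
      simp only [Finset.mem_insert, Finset.mem_singleton]
      rcases hcase with h | h | h
      · exact Or.inl h
      · rcases hcases d' hd' with ⟨hB, hA, hp⟩ | ⟨hA, hB, hp⟩
        · rw [hp] at h
          refine Or.inr (Or.inl ?_)
          rw [← h, hgiu d' hB]
        · rw [hp] at h
          refine Or.inr (Or.inr (Or.inl ?_))
          rw [← h, (hgi d' hA).2]
      · rcases hcases d' hd' with ⟨hB, hA, hp⟩ | ⟨hA, hB, hp⟩
        · rw [hp] at h
          refine Or.inr (Or.inr (Or.inr (Or.inl ?_)))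
          rw [← h, hgiu d' hB]
        · rw [hp] at h
          refine Or.inr (Or.inr (Or.inr (Or.inr ?_)))
          rw [← h, (hgi d' hA).2]
    have hclash : ∀ d ∈ D₀, ∀ d' ∈ D₀, d ≠ d' → c d = c d' →
        ¬(d' = p d ∨ p d' = d ∨ p d' = p d) := by
      intro d hd d' hd' hne hcc hcase
      rcases lt_or_gt_of_ne hne with h | h
      · have hcase' : d = p d' ∨ p d = d' ∨ p d = p d' := by tauto
        exact greedy_ne nb h (hmemnb d' hd' d hd hcase') hcc
      · exact greedy_ne nb h (hmemnb d hd d' hd' hcase) hcc.symm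
    obtain ⟨i, hE⟩ := exists_pos_piece hI D₀ hD c 5 hcle
    set E : Set ℕ := D₀ ∩ c ⁻¹' {i} with hEdef
    have hED : E ⊆ D₀ := Set.inter_subset_left
    have hEc : ∀ d ∈ E, c d = i := fun d hd => hd.2
    have hpEne : ∀ d ∈ E, p d ≠ d := fun d hd => hpne d (hED hd)
    have hnoconf : ∀ d ∈ E, ∀ d' ∈ E, d ≠ d' → ¬(d' = p d ∨ p d' = d ∨ p d' = p d) :=
      fun d hd d' hd' hne =>
        hclash d (hED hd) d' (hED hd') hne ((hEc d hd).trans (hEc d' hd').symm)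
    have hpnotE : ∀ d ∈ E, p d ∉ E := by
      intro d hd hpd
      by_cases h : d = p d
      · exact hpEne d hd h.symm
      · exact hnoconf d hd (p d) hpd h (Or.inl rfl)
    have hpinj : ∀ d ∈ E, ∀ d' ∈ E, p d = p d' → d = d' := by
      intro d hd d' hd' hp
      by_contra hne
      exact hnoconf d hd d' hd' hne (Or.inr (Or.inr hp.symm))
    set f : ℕ → ℕ := fun x => if x ∈ E then p x else
      if h : x ∈ p '' E then h.choose else x with hfdef
    have hfE : ∀ x ∈ E, f x = p x := by
      intro x hx; rw [hfdef]; simp [hx]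
    have hfp : ∀ x ∈ E, f (p x) = x := by
      intro x hx
      have h1 : p x ∉ E := hpnotE x hx
      have h2 : p x ∈ p '' E := Set.mem_image_of_mem p hx
      rw [hfdef]
      simp only [h1, if_false, dif_pos h2]
      exact hpinj _ h2.choose_spec.1 _ hx h2.choose_spec.2
    have hfid : ∀ x, x ∉ E → x ∉ p '' E → f x = x := by
      intro x h1 h2; rw [hfdef]; simp [h1, h2]
    have hinvol : Function.Involutive f := by
      intro x
      by_cases hx : x ∈ E
      · rw [hfE x hx, hfp x hx]
      · by_cases hp' : x ∈ p '' E
        · have : f x = hp'.choose := by rw [hfdef]; simp [hx, hp']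
          rw [this]
          have h1 : hp'.choose ∈ E := hp'.choose_spec.1
          rw [hfE _ h1, hp'.choose_spec.2]
        · rw [hfid x hx hp', hfid x hx hp']
    -- image lemmas
    have hpImg : ∀ X : Set ℕ, X ⊆ D₀ → X ∈ I → p '' X ∈ I := by
      intro X hXD hXI
      have hXB : X ∩ B ∈ I := hI.1 _ _ hXI Set.inter_subset_left
      have hXA : X \ B ∈ I := hI.1 _ _ hXI Set.diff_subset
      have hXAsub : X \ B ⊆ A := by
        intro x hx
        rcases hcases x (hXD hx.1) with ⟨hB, _, _⟩ | ⟨hA, _, _⟩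
        · exact absurd hB hx.2
        · exact hA
      have h1 : g '' (X ∩ B) ∈ I := (hstar _ Set.inter_subset_right).mpr hXB
      have h2 : gi '' (X \ B) ∈ I := by
        have hsub : gi '' (X \ B) ⊆ B := by
          rintro y ⟨x, hx, rfl⟩
          exact (hgi x (hXAsub hx)).1
        have himg : g '' (gi '' (X \ B)) = X \ B := by
          rw [← Set.image_comp]
          apply Set.Subset.antisymm
          · rintro y ⟨x, hx, rfl⟩
            simpa [Function.comp, (hgi x (hXAsub hx)).2] using hx
          · intro x hx
            exact ⟨x, hx, by simp [Function.comp, (hgi x (hXAsub hx)).2]⟩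
        have := (hstar _ hsub)
        rw [himg] at this
        exact this.mp hXA
      refine hI.1 _ _ (hI.2.1 _ _ h1 h2) ?_
      rintro y ⟨x, hx, rfl⟩
      by_cases hxB : x ∈ B
      · exact Or.inl ⟨x, ⟨hx, hxB⟩, by rw [hpdef]; simp [hxB]⟩
      · exact Or.inr ⟨x, ⟨hx, hxB⟩, by rw [hpdef]; simp [hxB]⟩
    have hpPre : ∀ S : Set ℕ, S ∈ I → {d | d ∈ E ∧ p d ∈ S} ∈ I := by
      intro S hS
      set T : Set ℕ := {d | d ∈ E ∧ p d ∈ S} with hT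
      have hTD : T ⊆ D₀ := fun d hd => hED hd.1
      have hTB : T ∩ B ∈ I := by
        have hsub : g '' (T ∩ B) ⊆ S := by
          rintro y ⟨x, ⟨hxT, hxB⟩, rfl⟩
          have : p x = g x := by rw [hpdef]; simp [hxB]
          rw [← this]; exact hxT.2
        exact (hstar _ Set.inter_subset_right).mp (hI.1 _ _ hS hsub)
      have hTA : T \ B ∈ I := by
        have hTAsub : T \ B ⊆ A := by
          intro x hx
          rcases hcases x (hTD hx.1) with ⟨hB, _, _⟩ | ⟨hA, _, _⟩
          · exact absurd hB hx.2
          · exact hA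
        have hsub : gi '' (T \ B) ⊆ B := by
          rintro y ⟨x, hx, rfl⟩
          exact (hgi x (hTAsub hx)).1
        have hgiT : gi '' (T \ B) ∈ I := by
          refine hI.1 _ _ hS ?_
          rintro y ⟨x, hx, rfl⟩
          have : p x = gi x := by rw [hpdef]; simp [hx.2]
          rw [← this]; exact hx.1.2
        have himg : g '' (gi '' (T \ B)) = T \ B := by
          rw [← Set.image_comp]
          apply Set.Subset.antisymm
          · rintro y ⟨x, hx, rfl⟩
            simpa [Function.comp, (hgi x (hTAsub hx)).2] using hx
          · intro x hx
            exact ⟨x, hx, by simp [Function.comp, (hgi x (hTAsub hx)).2]⟩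
        have := hstar _ hsub
        rw [himg] at this
        exact this.mpr hgiT
      have : T = (T ∩ B) ∪ (T \ B) := by simp [Set.inter_union_diff]
      rw [this]
      exact hI.2.1 _ _ hTB hTA
    have hfwd : ∀ S : Set ℕ, S ∈ I → f '' S ∈ I := by
      intro S hS
      have h1 : p '' (S ∩ E) ∈ I :=
        hpImg _ (fun x hx => hED hx.2) (hI.1 _ _ hS Set.inter_subset_left)
      have h2 : {d | d ∈ E ∧ p d ∈ S} ∈ I := hpPre S hS
      refine hI.1 _ _ (hI.2.1 _ _ (hI.2.1 _ _ h1 h2) hS) ?_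
      rintro y ⟨x, hx, rfl⟩
      by_cases hxE : x ∈ E
      · exact Or.inl (Or.inl ⟨x, ⟨hx, hxE⟩, (hfE x hxE).symm⟩)
      · by_cases hxp : x ∈ p '' E
        · have hfx : f x = hxp.choose := by rw [hfdef]; simp [hxE, hxp]
          refine Or.inl (Or.inr ?_)
          rw [hfx]
          refine ⟨hxp.choose_spec.1, ?_⟩
          rw [hxp.choose_spec.2]; exact hx
        · rw [hfid x hxE hxp]; exact Or.inr hx
    have hbii : ∀ S : Set ℕ, f '' S ∈ I ↔ S ∈ I := by
      intro S
      constructor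
      · intro h
        have := hfwd _ h
        rwa [← Set.image_comp, hinvol.comp_self, Set.image_id] at this
      · exact hfwd S
    refine ⟨f, ⟨hinvol.injective, hbii⟩, ?_⟩
    intro hfixI
    apply hE
    refine hI.1 _ _ hfixI ?_
    intro d hd
    simp only [Set.mem_compl_iff, fixedSet, Set.mem_setOf_eq]
    rw [hfE d hd]
    exact hpEne d hd
end

section
/- Every maximal ideal I on ω satisfies condition (C1): every bi-I-invariant injection f : ω → ω has fix(f) ∈ I*. -/
open Set Filter

/-- Pick an element of `Fin 3` different from both `a` and `b`. -/
def otherFin3 (a b : Fin 3) : Fin 3 :=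
  if 0 ≠ a ∧ 0 ≠ b then 0 else if 1 ≠ a ∧ 1 ≠ b then 1 else 2

lemma otherFin3_ne (a b : Fin 3) : otherFin3 a b ≠ a ∧ otherFin3 a b ≠ b := by
  revert a b; decide

/-- A greedy 3-coloring of `ℕ` such that `n` and `f n` get different colors
whenever `f` is injective and `f n ≠ n`. -/
noncomputable def col_s10 (f : ℕ → ℕ) : ℕ → Fin 3
  | n =>
    otherFin3
      (if h : f n < n then col_s10 f (f n) else 0)
      (if h : ∃ m, m < n ∧ f m = n then col_s10 f h.choose else 0)
  termination_by n => n
  decreasing_by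
  · exact h
  · exact h.choose_spec.1

lemma col_ne (f : ℕ → ℕ) (hf : Function.Injective f) (n : ℕ) (hn : f n ≠ n) :
    col_s10 f n ≠ col_s10 f (f n) := by
  rcases lt_or_gt_of_ne hn with h | h
  · rw [col_s10, dif_pos h]
    exact (otherFin3_ne _ _).1
  · have hex : ∃ m, m < f n ∧ f m = f n := ⟨n, h, rfl⟩
    have hch : hex.choose = n := hf hex.choose_spec.2
    conv_rhs => rw [col_s10, dif_pos hex]
    rw [hch]
    exact fun he => (otherFin3_ne _ _).2 he.symm

/-- every maximal ideal satisfies condition (C1). -/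
theorem stmt_10 (I : Set (Set ℕ)) (hI : MaximalIdeal I) :
    ∀ f : ℕ → ℕ, BiInvariant I f → (fixedSet f)ᶜ ∈ I := by
  rintro f ⟨hinj, hbi⟩
  obtain ⟨⟨hsub, hun, hfin, huniv⟩, hmax⟩ := hI
  by_contra hD
  set D := (fixedSet f)ᶜ with hDdef
  have hDun : D = (D ∩ col_s10 f ⁻¹' {0}) ∪ (D ∩ col_s10 f ⁻¹' {1}) ∪ (D ∩ col_s10 f ⁻¹' {2}) := by
    ext n
    simp only [Set.mem_union, Set.mem_inter_iff, Set.mem_preimage, Set.mem_singleton_iff]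
    constructor
    · intro h
      have h3 : ∀ x : Fin 3, x = 0 ∨ x = 1 ∨ x = 2 := by decide
      have : col_s10 f n = 0 ∨ col_s10 f n = 1 ∨ col_s10 f n = 2 := h3 _
      tauto
    · tauto
  have key : ∃ i : Fin 3, D ∩ col_s10 f ⁻¹' {i} ∉ I := by
    by_contra h
    push_neg at h
    apply hD
    rw [hDun]
    exact hun _ _ (hun _ _ (h 0) (h 1)) (h 2)
  obtain ⟨i, hi⟩ := key
  set A := D ∩ col_s10 f ⁻¹' {i} with hA
  have hAc : Aᶜ ∈ I := (hmax A).resolve_left hi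
  have himg : f '' A ⊆ Aᶜ := by
    rintro _ ⟨n, hn, rfl⟩ hmem
    have hn1 : f n ≠ n := hn.1
    have : col_s10 f n ≠ col_s10 f (f n) := col_ne f hinj n hn1
    exact this (hn.2.trans hmem.2.symm)
  exact hi ((hbi A).mp (hsub _ _ hAc himg))
end

section
/- If I and J are two non-isomorphic maximal ideals on ω, then the ideal I ⊕ J on {0,1}×ω satisfies condition (C1): every bi-(I⊕J)-invariant injection f : {0,1}×ω → {0,1}×ω has fix(f) ∈ (I⊕J)*. -/
open Set Filter

/-- The ideal `I ⊕ J` on `{0,1} × ω` (here `Bool × ℕ`, `false` playing the role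
of `0` and `true` of `1`). -/
def oplus (I J : Set (Set ℕ)) : Set (Set (Bool × ℕ)) :=
  {A | {n : ℕ | (false, n) ∈ A} ∈ I ∧ {n : ℕ | (true, n) ∈ A} ∈ J}

lemma pick3_exists : ∀ a b : Fin 3, ∃ c : Fin 3, c ≠ a ∧ c ≠ b := by decide

noncomputable def pick3 (a b : Fin 3) : Fin 3 := (pick3_exists a b).choose
lemma pick3_ne_left (a b : Fin 3) : pick3 a b ≠ a := (pick3_exists a b).choose_spec.1
lemma pick3_ne_right (a b : Fin 3) : pick3 a b ≠ b := (pick3_exists a b).choose_spec.2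

open Classical in
noncomputable def colfn (f : Bool × ℕ → Bool × ℕ) : ℕ → Fin 3
  | n =>
    pick3
      (if h : ∃ m : ℕ, m < n ∧ ∃ x : Bool × ℕ, Encodable.encode x = n ∧ Encodable.encode (f x) = m
        then colfn f h.choose else 0)
      (if h : ∃ m : ℕ, m < n ∧ ∃ y : Bool × ℕ, Encodable.encode y = m ∧ Encodable.encode (f y) = n
        then colfn f h.choose else 0)
  termination_by n => n
  decreasing_by
  · exact h.choose_spec.1
  · exact h.choose_spec.1

open Classical in
lemma colfn_ne (f : Bool × ℕ → Bool × ℕ) (hf : Function.Injective f)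
    (x : Bool × ℕ) (hx : f x ≠ x) :
    colfn f (Encodable.encode x) ≠ colfn f (Encodable.encode (f x)) := by
  have henc : Encodable.encode (f x) ≠ Encodable.encode x :=
    fun h => hx (Encodable.encode_injective h)
  rcases lt_or_gt_of_ne henc with hlt | hgt
  · -- encode (f x) < encode x : unfold at encode x, fwd branch
    rw [colfn]
    have h : ∃ m : ℕ, m < Encodable.encode x ∧ ∃ z : Bool × ℕ,
        Encodable.encode z = Encodable.encode x ∧ Encodable.encode (f z) = m :=
      ⟨Encodable.encode (f x), hlt, x, rfl, rfl⟩
    rw [dif_pos h]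
    have hc : h.choose = Encodable.encode (f x) := by
      obtain ⟨-, z, hz1, hz2⟩ := h.choose_spec
      have : z = x := Encodable.encode_injective hz1
      rw [← hz2, this]
    rw [hc]
    exact pick3_ne_left _ _
  · -- encode x < encode (f x) : unfold at encode (f x), bwd branch
    apply Ne.symm
    have h : ∃ m : ℕ, m < Encodable.encode (f x) ∧ ∃ y : Bool × ℕ,
        Encodable.encode y = m ∧ Encodable.encode (f y) = Encodable.encode (f x) :=
      ⟨Encodable.encode x, hgt, x, rfl, rfl⟩
    have hc : h.choose = Encodable.encode x := by
      obtain ⟨-, y, hy1, hy2⟩ := h.choose_spec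
      have : f y = f x := Encodable.encode_injective hy2
      rw [← hy1, hf this]
    rw [colfn, dif_pos h, hc]
    exact pick3_ne_right _ _

lemma exists_infinite_small (I : Set (Set ℕ)) (hI : MaximalIdeal I) (A : Set ℕ) (hA : A ∉ I) :
    ∃ S : Set ℕ, S ⊆ A ∧ S.Infinite ∧ S ∈ I := by
  obtain ⟨hid, hmax⟩ := hI
  have hAinf : A.Infinite := fun h => hA (hid.2.2.1 A h)
  haveI := hAinf.to_subtype
  obtain ⟨d⟩ : Nonempty (Denumerable ↥A) := nonempty_denumerable ↥A
  let e : ↥A ≃ ℕ := d.eqv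
  set A1 : Set ℕ := Subtype.val '' {a : ↥A | Even (e a)} with hA1
  set A2 : Set ℕ := Subtype.val '' {a : ↥A | ¬ Even (e a)} with hA2
  have h1inf : A1.Infinite := by
    have hinj : Function.Injective (fun k : ℕ => (e.symm (2 * k) : ℕ)) := by
      intro a b hab
      have := Subtype.val_injective hab
      have := e.symm.injective this
      omega
    have hmem : ∀ k : ℕ, (e.symm (2 * k) : ℕ) ∈ A1 := fun k =>
      ⟨e.symm (2 * k), by simp, rfl⟩
    exact Set.infinite_of_injective_forall_mem hinj hmem
  have h2inf : A2.Infinite := by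
    have hinj : Function.Injective (fun k : ℕ => (e.symm (2 * k + 1) : ℕ)) := by
      intro a b hab
      have := Subtype.val_injective hab
      have := e.symm.injective this
      omega
    have hmem : ∀ k : ℕ, (e.symm (2 * k + 1) : ℕ) ∈ A2 := fun k =>
      ⟨e.symm (2 * k + 1), by simp [Nat.even_add_one, parity_simps], rfl⟩
    exact Set.infinite_of_injective_forall_mem hinj hmem
  have h1A : A1 ⊆ A := by rintro x ⟨a, -, rfl⟩; exact a.2
  have h2A : A2 ⊆ A := by rintro x ⟨a, -, rfl⟩; exact a.2
  by_cases h1 : A1 ∈ I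
  · exact ⟨A1, h1A, h1inf, h1⟩
  by_cases h2 : A2 ∈ I
  · exact ⟨A2, h2A, h2inf, h2⟩
  exfalso
  have hc1 : A1ᶜ ∈ I := (hmax A1).resolve_left h1
  have hc2 : A2ᶜ ∈ I := (hmax A2).resolve_left h2
  have : A1ᶜ ∪ A2ᶜ = Set.univ := by
    ext x; simp only [Set.mem_union, Set.mem_compl_iff, Set.mem_univ, iff_true]
    by_contra hx
    push_neg at hx
    obtain ⟨⟨a1, ha1, he1⟩, ⟨a2, ha2, he2⟩⟩ := hx
    have : a1 = a2 := Subtype.val_injective (he1.trans he2.symm)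
    rw [this] at ha1
    exact ha2 ha1
  exact hid.2.2.2 (this ▸ hid.2.1 _ _ hc1 hc2)

lemma absorb (I : Set (Set ℕ)) (hI : MaximalIdeal I) (A : Set ℕ) (hA : A ∉ I) :
    ∃ v : ℕ → ℕ, Set.BijOn v Set.univ A ∧ ∀ S : Set ℕ, S ∈ I ↔ v '' S ∈ I := by
  classical
  obtain ⟨S₀, hS₀A, hS₀inf, hS₀I⟩ := exists_infinite_small I hI A hA
  obtain ⟨hid, hmax⟩ := hI
  have hAc : Aᶜ ∈ I := (hmax A).resolve_left hA
  set T : Set ℕ := S₀ ∪ Aᶜ with hT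
  have hTI : T ∈ I := hid.2.1 _ _ hS₀I hAc
  have hTinf : T.Infinite := hS₀inf.mono Set.subset_union_left
  haveI := hTinf.to_subtype
  haveI := hS₀inf.to_subtype
  obtain ⟨dT⟩ : Nonempty (Denumerable ↥T) := nonempty_denumerable ↥T
  obtain ⟨dS⟩ : Nonempty (Denumerable ↥S₀) := nonempty_denumerable ↥S₀
  haveI := dT; haveI := dS
  let e : ↥T ≃ ↥S₀ := (Denumerable.eqv ↥T).trans (Denumerable.eqv ↥S₀).symm
  have hS₀T : S₀ ⊆ T := Set.subset_union_left
  set v : ℕ → ℕ := fun n => if h : n ∈ T then (e ⟨n, h⟩ : ℕ) else n with hv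
  have hvT : ∀ n (h : n ∈ T), v n = (e ⟨n, h⟩ : ℕ) := fun n h => dif_pos h
  have hvnT : ∀ n, n ∉ T → v n = n := fun n h => dif_neg h
  have hmemS₀ : ∀ n (h : n ∈ T), v n ∈ S₀ := by
    intro n h; rw [hvT n h]; exact (e ⟨n, h⟩).2
  have hnotT : ∀ a, a ∈ A → a ∉ S₀ → a ∉ T := by
    intro a haA haS ht
    rcases ht with h | h
    · exact haS h
    · exact h haA
  refine ⟨v, ⟨?_, ?_, ?_⟩, ?_⟩
  · intro n _
    by_cases h : n ∈ T
    · exact hS₀A (hmemS₀ n h)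
    · rw [hvnT n h]
      by_contra hn
      exact h (Or.inr hn)
  · intro a _ b _ hab
    by_cases ha : a ∈ T <;> by_cases hb : b ∈ T
    · rw [hvT a ha, hvT b hb] at hab
      exact congrArg Subtype.val (e.injective (Subtype.val_injective hab))
    · exfalso; rw [hvnT b hb] at hab
      exact hb (hab ▸ hS₀T (hmemS₀ a ha))
    · exfalso; rw [hvnT a ha] at hab
      exact ha (hab ▸ hS₀T (hmemS₀ b hb))
    · rw [hvnT a ha, hvnT b hb] at hab; exact hab
  · intro a haA
    by_cases hs : a ∈ S₀
    · refine ⟨(e.symm ⟨a, hs⟩ : ℕ), Set.mem_univ _, ?_⟩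
      rw [hvT _ (e.symm ⟨a, hs⟩).2]
      rw [Subtype.coe_eta, Equiv.apply_symm_apply]
    · exact ⟨a, Set.mem_univ _, hvnT a (hnotT a haA hs)⟩
  · intro S
    have hsub1 : v '' S ⊆ S ∪ T := by
      rintro x ⟨s, hs, rfl⟩
      by_cases h : s ∈ T
      · exact Or.inr (hS₀T (hmemS₀ s h))
      · rw [hvnT s h]; exact Or.inl hs
    have hsub2 : S ⊆ v '' S ∪ T := by
      intro s hs
      by_cases h : s ∈ T
      · exact Or.inr h
      · exact Or.inl ⟨s, hs, hvnT s h⟩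
    constructor
    · intro hS
      exact hid.1 _ _ (hid.2.1 _ _ hS hTI) hsub1
    · intro hS
      exact hid.1 _ _ (hid.2.1 _ _ hS hTI) hsub2

lemma iso_of_image (I J : Set (Set ℕ)) (w : ℕ → ℕ) (hw : Function.Bijective w)
    (h : ∀ S : Set ℕ, S ∈ I ↔ w '' S ∈ J) : Isomorphic I J := by
  let e := Equiv.ofBijective w hw
  refine ⟨e.symm, e.symm.bijective, fun S => ?_⟩
  have : ⇑e.symm ⁻¹' S = w '' S := by
    rw [← Equiv.image_eq_preimage_symm]
    rfl
  rw [this]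
  exact h S

lemma iso_symm {I J : Set (Set ℕ)} (h : Isomorphic J I) : Isomorphic I J := by
  obtain ⟨f, hf, hiff⟩ := h
  apply iso_of_image I J f hf
  intro S
  rw [hiff (f '' S), Set.preimage_image_eq S hf.injective]

lemma compose_iso (I J : Set (Set ℕ)) (hI : MaximalIdeal I) (hJ : MaximalIdeal J)
    (A B : Set ℕ) (hA : A ∉ I) (hB : B ∉ J) (g : ℕ → ℕ) (hg : Set.BijOn g A B)
    (htr : ∀ S : Set ℕ, S ⊆ A → (S ∈ I ↔ g '' S ∈ J)) : Isomorphic I J := by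
  classical
  obtain ⟨vI, hvI, hvImem⟩ := absorb I hI A hA
  obtain ⟨vJ, hvJ, hvJmem⟩ := absorb J hJ B hB
  set w : ℕ → ℕ := fun n => Function.invFun vJ (g (vI n)) with hwdef
  have hvIA : ∀ n, vI n ∈ A := fun n => hvI.1 (Set.mem_univ n)
  have hgB : ∀ n, g (vI n) ∈ B := fun n => hg.1 (hvIA n)
  have hvJinj : Function.Injective vJ := fun a b hab => hvJ.2.1 (Set.mem_univ a) (Set.mem_univ b) hab
  have hvJrange : ∀ b ∈ B, vJ (Function.invFun vJ b) = b := by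
    intro b hb
    obtain ⟨m, -, hm⟩ := hvJ.2.2 hb
    exact Function.invFun_eq ⟨m, hm⟩
  have hvIinj : Function.Injective vI := fun a b hab => hvI.2.1 (Set.mem_univ a) (Set.mem_univ b) hab
  have hwbij : Function.Bijective w := by
    constructor
    · intro a b hab
      have : g (vI a) = g (vI b) := by
        have := congrArg vJ hab
        rwa [hvJrange _ (hgB a), hvJrange _ (hgB b)] at this
      exact hvIinj (hg.2.1 (hvIA a) (hvIA b) this)
    · intro m
      obtain ⟨a, haA, hga⟩ := hg.2.2 (hvJ.1 (Set.mem_univ m))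
      obtain ⟨n, -, hn⟩ := hvI.2.2 haA
      refine ⟨n, ?_⟩
      show Function.invFun vJ (g (vI n)) = m
      rw [hn, hga, Function.leftInverse_invFun hvJinj m]
  apply iso_of_image I J w hwbij
  intro S
  have h1 : vI '' S ⊆ A := by rintro x ⟨s, -, rfl⟩; exact hvIA s
  have h2 : vJ '' (w '' S) = g '' (vI '' S) := by
    ext x
    simp only [Set.mem_image, hwdef]
    constructor
    · rintro ⟨y, ⟨s, hs, rfl⟩, rfl⟩
      exact ⟨vI s, ⟨s, hs, rfl⟩, (hvJrange _ (hgB s)).symm⟩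
    · rintro ⟨y, ⟨s, hs, rfl⟩, rfl⟩
      exact ⟨Function.invFun vJ (g (vI s)), ⟨s, hs, rfl⟩, hvJrange _ (hgB s)⟩
  rw [hvImem, htr _ h1, hvJmem (w '' S), h2]

lemma aux_main (I J : Set (Set ℕ)) (hI : MaximalIdeal I) (hJ : MaximalIdeal J)
    (f : Bool × ℕ → Bool × ℕ) (hf : BiInvariant (oplus I J) f)
    (hD : {n : ℕ | f (false, n) ≠ (false, n)} ∉ I) : Isomorphic I J := by
  obtain ⟨hid, hmax⟩ := hI
  obtain ⟨hJid, hJmax⟩ := hJ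
  have hemptyI : (∅ : Set ℕ) ∈ I := hid.2.2.1 ∅ finite_empty
  have hemptyJ : (∅ : Set ℕ) ∈ J := hJid.2.2.1 ∅ finite_empty
  set Q : Fin 3 → Set ℕ := fun i =>
    {n | f (false, n) ≠ (false, n) ∧ colfn f (Encodable.encode ((false : Bool), n)) = i}
    with hQdef
  obtain ⟨i, hQ⟩ : ∃ i : Fin 3, Q i ∉ I := by
    by_contra h
    push_neg at h
    apply hD
    apply hid.1 _ _ (hid.2.1 _ _ (hid.2.1 _ _ (h 0) (h 1)) (h 2))
    intro n hn
    have h3 : ∀ c : Fin 3, c = 0 ∨ c = 1 ∨ c = 2 := by decide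
    rcases h3 (colfn f (Encodable.encode ((false : Bool), n))) with hc | hc | hc
    · exact Or.inl (Or.inl ⟨hn, hc⟩)
    · exact Or.inl (Or.inr ⟨hn, hc⟩)
    · exact Or.inr ⟨hn, hc⟩
  have hQc : (Q i)ᶜ ∈ I := (hmax (Q i)).resolve_left hQ
  have hkey : ∀ n ∈ Q i, ∀ m : ℕ, f (false, n) = (false, m) → m ∉ Q i := by
    intro n hn m hm hmQ
    have := colfn_ne f hf.1 ((false : Bool), n) hn.1
    rw [hm] at this
    exact this (hn.2.trans hmQ.2.symm)
  set A' : Set ℕ := {n | n ∈ Q i ∧ (f ((false : Bool), n)).1 = false} with hA'def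
  set A : Set ℕ := {n | n ∈ Q i ∧ (f ((false : Bool), n)).1 = true} with hAdef
  have hA' : A' ∈ I := by
    set E' : Set (Bool × ℕ) := {p | p.1 = false ∧ p.2 ∈ A'} with hE'def
    have him : f '' E' ∈ oplus I J := by
      constructor
      · apply hid.1 ((Q i)ᶜ) _ hQc
        rintro m ⟨p, hp, hfp⟩
        have hp1 : p = ((false : Bool), p.2) := by
          rw [← hp.1]
        rw [hp1] at hfp
        exact hkey p.2 hp.2.1 m hfp
      · have he : {n : ℕ | ((true : Bool), n) ∈ f '' E'} = ∅ := by
          ext m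
          simp only [Set.mem_setOf_eq, Set.mem_empty_iff_false, iff_false]
          rintro ⟨p, hp, hfp⟩
          have hp1 : p = ((false : Bool), p.2) := by rw [← hp.1]
          have : (f p).1 = false := by rw [hp1] at hp ⊢; exact hp.2.2
          rw [hfp] at this
          simp at this
        rw [he]
        exact hemptyJ
    have hE' : E' ∈ oplus I J := (hf.2 E').mp him
    have : {n : ℕ | ((false : Bool), n) ∈ E'} = A' := by
      ext n
      simp [hE'def]
    exact this ▸ hE'.1
  have hsub : Q i ⊆ A' ∪ A := by
    intro n hn
    rcases Bool.eq_false_or_eq_true (f ((false : Bool), n)).1 with h | h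
    · exact Or.inr ⟨hn, h⟩
    · exact Or.inl ⟨hn, h⟩
  have hA : A ∉ I := by
    intro h
    exact hQ (hid.1 _ _ (hid.2.1 _ _ hA' h) hsub)
  set g : ℕ → ℕ := fun n => (f ((false : Bool), n)).2 with hgdef
  have hkey2 : ∀ n ∈ A, f ((false : Bool), n) = ((true : Bool), g n) := by
    intro n hn
    have h1 : (f ((false : Bool), n)).1 = true := hn.2
    rw [← h1]
  have htr : ∀ S : Set ℕ, S ⊆ A → (S ∈ I ↔ g '' S ∈ J) := by
    intro S hSA
    set X : Set (Bool × ℕ) := {p | p.1 = false ∧ p.2 ∈ S} with hXdef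
    have hXK : X ∈ oplus I J ↔ S ∈ I := by
      have e1 : {n : ℕ | ((false : Bool), n) ∈ X} = S := by ext n; simp [hXdef]
      have e2 : {n : ℕ | ((true : Bool), n) ∈ X} = ∅ := by ext n; simp [hXdef]
      show ({n : ℕ | ((false : Bool), n) ∈ X} ∈ I ∧ {n : ℕ | ((true : Bool), n) ∈ X} ∈ J) ↔ S ∈ I
      rw [e1, e2]
      simp [hemptyJ]
    have hfXK : f '' X ∈ oplus I J ↔ g '' S ∈ J := by
      have i1 : {n : ℕ | ((false : Bool), n) ∈ f '' X} = ∅ := by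
        ext m
        simp only [Set.mem_setOf_eq, Set.mem_empty_iff_false, iff_false]
        rintro ⟨p, hp, hfp⟩
        have hp1 : p = ((false : Bool), p.2) := by rw [← hp.1]
        have := hkey2 p.2 (hSA hp.2)
        rw [hp1, this] at hfp
        simp at hfp
      have i2 : {m : ℕ | ((true : Bool), m) ∈ f '' X} = g '' S := by
        ext m
        simp only [Set.mem_setOf_eq, Set.mem_image]
        constructor
        · rintro ⟨p, hp, hfp⟩
          have hp1 : p = ((false : Bool), p.2) := by rw [← hp.1]
          have := hkey2 p.2 (hSA hp.2)
          rw [hp1, this] at hfp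
          exact ⟨p.2, hp.2, (Prod.mk.injEq _ _ _ _ ▸ hfp :
            (true : Bool) = true ∧ g p.2 = m).2⟩
        · rintro ⟨n, hn, rfl⟩
          exact ⟨((false : Bool), n), ⟨rfl, hn⟩, hkey2 n (hSA hn)⟩
      show ({n : ℕ | ((false : Bool), n) ∈ f '' X} ∈ I ∧
        {n : ℕ | ((true : Bool), n) ∈ f '' X} ∈ J) ↔ g '' S ∈ J
      rw [i1, i2]
      simp [hemptyI]
    rw [← hXK, ← hf.2 X] at *
    exact hfXK
  have hgbij : Set.BijOn g A (g '' A) := by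
    refine ⟨Set.mapsTo_image g A, ?_, Set.surjOn_image g A⟩
    intro n hn m hm hnm
    have h1 := hkey2 n hn
    have h2 := hkey2 m hm
    have : f ((false : Bool), n) = f ((false : Bool), m) := by rw [h1, h2, hnm]
    have := hf.1 this
    simpa using this
  have hB : g '' A ∉ J := fun h => hA ((htr A (subset_refl A)).mpr h)
  exact compose_iso I J ⟨hid, hmax⟩ ⟨hJid, hJmax⟩ A (g '' A) hA hB g hgbij htr

def swp : Bool × ℕ → Bool × ℕ := fun p => (!p.1, p.2)

lemma swp_swp : ∀ p : Bool × ℕ, swp (swp p) = p := by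
  rintro ⟨b, m⟩
  simp [swp]

lemma swp_inj : Function.Injective swp := by
  intro p q h
  have := congrArg swp h
  rwa [swp_swp, swp_swp] at this

lemma swap_mem (I J : Set (Set ℕ)) (X : Set (Bool × ℕ)) :
    swp '' X ∈ oplus J I ↔ X ∈ oplus I J := by
  have key : ∀ (b : Bool) (n : ℕ), ((b, n) ∈ swp '' X ↔ (!b, n) ∈ X) := by
    intro b n
    constructor
    · rintro ⟨⟨c, m⟩, hp, hq⟩
      have hq' : (!c, m) = (b, n) := hq
      rw [Prod.mk.injEq] at hq'
      obtain ⟨h1, h2⟩ := hq'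
      subst h2
      rw [← h1, Bool.not_not]
      exact hp
    · intro hp
      exact ⟨(!b, n), hp, by simp [swp]⟩
  have e1 : {n : ℕ | ((false : Bool), n) ∈ swp '' X} = {n : ℕ | ((true : Bool), n) ∈ X} := by
    ext n; exact key false n
  have e2 : {n : ℕ | ((true : Bool), n) ∈ swp '' X} = {n : ℕ | ((false : Bool), n) ∈ X} := by
    ext n; exact key true n
  show ({n : ℕ | ((false : Bool), n) ∈ swp '' X} ∈ J ∧
      {n : ℕ | ((true : Bool), n) ∈ swp '' X} ∈ I) ↔ _
  rw [e1, e2]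
  exact and_comm

/-- for non-isomorphic maximal ideals `I`, `J`, the ideal `I ⊕ J`
satisfies condition (C1). -/
theorem stmt_11 (I J : Set (Set ℕ)) (hI : MaximalIdeal I) (hJ : MaximalIdeal J)
    (hnoniso : ¬ Isomorphic I J) :
    ∀ f : Bool × ℕ → Bool × ℕ, BiInvariant (oplus I J) f →
      (fixedSet f)ᶜ ∈ oplus I J := by
  intro f hf
  refine ⟨?_, ?_⟩
  · by_contra h
    exact hnoniso (aux_main I J hI hJ f hf h)
  · by_contra h
    set f' : Bool × ℕ → Bool × ℕ := swp ∘ f ∘ swp with hf'def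
    have hbi' : BiInvariant (oplus J I) f' := by
      constructor
      · exact swp_inj.comp (hf.1.comp swp_inj)
      · intro X
        have himg : f' '' X = swp '' (f '' (swp '' X)) := by
          rw [hf'def, Set.image_comp, Set.image_comp]
        rw [himg, swap_mem I J, hf.2, swap_mem J I]
    have eqiff : ∀ n : ℕ, (f' ((false : Bool), n) = ((false : Bool), n)) ↔
        (f ((true : Bool), n) = ((true : Bool), n)) := by
      intro n
      constructor
      · intro h
        have h' : swp (f ((true : Bool), n)) = ((false : Bool), n) := h
        have := congrArg swp h'
        rwa [swp_swp] at this
      · intro h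
        show swp (f ((true : Bool), n)) = ((false : Bool), n)
        rw [h]
        rfl
    have hD' : {n : ℕ | f' ((false : Bool), n) ≠ ((false : Bool), n)} ∉ J := by
      have : {n : ℕ | f' ((false : Bool), n) ≠ ((false : Bool), n)} =
          {n : ℕ | f ((true : Bool), n) ≠ ((true : Bool), n)} := by
        ext n; exact not_congr (eqiff n)
      rw [this]
      exact h
    exact hnoniso (iso_symm (aux_main J I hJ hI f' hbi' hD'))
end

section
/- For any ideal I on ω the following are equivalent: (a) there is an I-invariant injection f : ω → ω with fix(f) ∉ I* and f[ω] ∉ I; (b) there are A, B ⊆ ω such that B ∉ I, the symmetric difference A △ B ∉ I, and I|A ⊑ I|B; (c) I is not a maximal ideal. -/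
open Set Filter

/-- An injection `f` is `I`-invariant if `f[A] ∈ I` for all `A ∈ I`. -/
def Invariant (I : Set (Set ℕ)) (f : ℕ → ℕ) : Prop :=
  Function.Injective f ∧ ∀ A ∈ I, f '' A ∈ I

/-- `I|A ⊑ I|B`: a bijection `f : B → A` with `f⁻¹[X] ∈ I|B` for all `X ∈ I|A`. -/
def RSub (I : Set (Set ℕ)) (A B : Set ℕ) : Prop :=
  ∃ f : ℕ → ℕ, Set.BijOn f B A ∧
    ∀ X : Set ℕ, X ⊆ A → X ∈ restr I A → B ∩ f ⁻¹' X ∈ restr I B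


private lemma restr_iff' {I : Set (Set ℕ)} (hI : IsIdeal I) {A X : Set ℕ} (hXA : X ⊆ A) :
    X ∈ restr I A ↔ X ∈ I := by
  constructor
  · rintro ⟨B, hB, rfl⟩
    exact hI.1 B _ hB Set.inter_subset_left
  · intro hX
    exact ⟨X, hX, (Set.inter_eq_self_of_subset_left hXA).symm⟩

/-- If `I` is maximal then every invariant injection with large set of moved
points has small range. -/
private lemma max_kills {I : Set (Set ℕ)} (hI : IsIdeal I)
    (hmax : ∀ A : Set ℕ, A ∈ I ∨ Aᶜ ∈ I) {f : ℕ → ℕ} (hf : Invariant I f)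
    (hfix : (fixedSet f)ᶜ ∉ I) : Set.range f ∈ I := by
  obtain ⟨hinj, hinv⟩ := hf
  set M : Set ℕ := (fixedSet f)ᶜ with hMdef
  have hF : fixedSet f ∈ I := by
    rcases hmax M with h | h
    · exact absurd h hfix
    · rwa [hMdef, compl_compl] at h
  -- Zorn's lemma: a maximal `Y ⊆ M` with `Y ∩ f[Y] = ∅`
  set S : Set (Set ℕ) := {Y | Y ⊆ M ∧ Y ∩ f '' Y = ∅} with hSdef
  have hchain : ∀ c ⊆ S, IsChain (· ⊆ ·) c → ∃ ub ∈ S, ∀ s ∈ c, s ⊆ ub := by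
    intro c hc hisc
    refine ⟨⋃₀ c, ⟨?_, ?_⟩, fun s hs => Set.subset_sUnion_of_mem hs⟩
    · intro x hx
      obtain ⟨Y, hYc, hxY⟩ := hx
      exact (hc hYc).1 hxY
    · ext z
      simp only [Set.mem_inter_iff, Set.mem_empty_iff_false, iff_false, not_and]
      rintro ⟨Y1, hY1, hzY1⟩ ⟨w, ⟨Y2, hY2, hwY2⟩, rfl⟩
      rcases hisc.total hY1 hY2 with h | h
      · have h0 : f w ∈ Y2 ∩ f '' Y2 := ⟨h hzY1, ⟨w, hwY2, rfl⟩⟩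
        rw [(hc hY2).2] at h0
        exact h0
      · have h0 : f w ∈ Y1 ∩ f '' Y1 := ⟨hzY1, ⟨w, h hwY2, rfl⟩⟩
        rw [(hc hY1).2] at h0
        exact h0
  obtain ⟨Y, hYmax⟩ := zorn_subset S hchain
  obtain ⟨hYM, hYdisj⟩ := hYmax.1
  have hcover : ∀ x ∈ M, x ∈ Y ∨ x ∈ f '' Y ∨ f x ∈ Y := by
    intro x hxM
    by_contra hcon
    push_neg at hcon
    obtain ⟨h1, h2, h3⟩ := hcon
    have hins : insert x Y ∈ S := by
      refine ⟨Set.insert_subset hxM hYM, ?_⟩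
      ext z
      simp only [Set.mem_inter_iff, Set.mem_empty_iff_false, iff_false, not_and]
      rintro hz1 ⟨w, hw, rfl⟩
      rcases Set.mem_insert_iff.1 hz1 with hfwx | hfwY
      · rcases Set.mem_insert_iff.1 hw with rfl | hwY
        · exact hxM (hfwx ▸ hfwx)
        · exact h2 (hfwx ▸ ⟨w, hwY, rfl⟩)
      · rcases Set.mem_insert_iff.1 hw with rfl | hwY
        · exact h3 hfwY
        · have h0 : f w ∈ Y ∩ f '' Y := ⟨hfwY, ⟨w, hwY, rfl⟩⟩
          rw [hYdisj] at h0
          exact h0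
    have hsub : insert x Y ⊆ Y := hYmax.2 hins (Set.subset_insert x Y)
    exact h1 (hsub (Set.mem_insert x Y))
  have hfMI : f '' M ∈ I := by
    rcases hmax Y with hY | hYc
    · -- `Y ∈ I`
      have hfY : f '' Y ∈ I := hinv Y hY
      have hffY : f '' (f '' Y) ∈ I := hinv _ hfY
      have hsub : f '' M ⊆ f '' Y ∪ (f '' (f '' Y) ∪ Y) := by
        rintro z ⟨x, hxM, rfl⟩
        rcases hcover x hxM with h | h | h
        · exact Or.inl ⟨x, h, rfl⟩
        · exact Or.inr (Or.inl ⟨x, h, rfl⟩)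
        · exact Or.inr (Or.inr h)
      exact hI.1 _ _ (hI.2.1 _ _ hfY (hI.2.1 _ _ hffY hY)) hsub
    · -- `Yᶜ ∈ I`
      have hfYc : f '' Y ⊆ Yᶜ := by
        intro z hz hzY
        have h0 : z ∈ Y ∩ f '' Y := ⟨hzY, hz⟩
        rw [hYdisj] at h0
        exact h0
      have hfY : f '' Y ∈ I := hI.1 _ _ hYc hfYc
      have hMY : M \ Y ∈ I := hI.1 _ _ hYc (fun z hz => hz.2)
      have hfMY : f '' (M \ Y) ∈ I := hinv _ hMY
      have hsub : f '' M ⊆ f '' Y ∪ f '' (M \ Y) := by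
        rintro z ⟨x, hxM, rfl⟩
        by_cases hxY : x ∈ Y
        · exact Or.inl ⟨x, hxY, rfl⟩
        · exact Or.inr ⟨x, ⟨hxM, hxY⟩, rfl⟩
      exact hI.1 _ _ (hI.2.1 _ _ hfY hfMY) hsub
  have hsub : Set.range f ⊆ fixedSet f ∪ f '' M := by
    rintro z ⟨x, rfl⟩
    by_cases hx : f x = x
    · left
      show f (f x) = f x
      rw [hx]
      exact hx
    · right
      exact ⟨x, hx, rfl⟩
  exact hI.1 _ _ (hI.2.1 _ _ hF hfMI) hsub

/-- From non-maximality, construct an invariant injection whose fixed points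
are not co-small, and whose range is neither small nor co-small. -/
private lemma notmax_construct {I : Set (Set ℕ)} (hI : IsIdeal I)
    (hnm : ¬ ∀ A : Set ℕ, A ∈ I ∨ Aᶜ ∈ I) :
    ∃ f : ℕ → ℕ, Invariant I f ∧ (fixedSet f)ᶜ ∉ I ∧ Set.range f ∉ I ∧
      (Set.range f)ᶜ ∉ I := by
  classical
  push_neg at hnm
  obtain ⟨X, hX, hXc⟩ := hnm
  set P : Set ℕ := Xᶜ with hPdef
  have hPinf : P.Infinite := by
    by_contra h
    rw [Set.not_infinite] at h
    exact hXc (hI.2.2.1 P h)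
  obtain ⟨Sg, hSP, hSinf, hkey⟩ :
      ∃ Sg : Set ℕ, Sg ⊆ P ∧ Sg.Infinite ∧
        (Sg ∈ I ∨ ∀ T ∈ I, T ⊆ P → T.Finite) := by
    by_cases hex : ∃ T : Set ℕ, T ⊆ P ∧ T.Infinite ∧ T ∈ I
    · obtain ⟨T, h1, h2, h3⟩ := hex
      exact ⟨T, h1, h2, Or.inl h3⟩
    · push_neg at hex
      refine ⟨P, subset_rfl, hPinf, Or.inr ?_⟩
      intro T hT hTP
      by_contra hfin
      exact hex T hTP hfin hT
  set p : ℕ → Prop := fun n => n ∈ P with hpdef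
  set q : ℕ → Prop := fun n => n ∈ Sg with hqdef
  have hpinf : (setOf p).Infinite := hPinf
  have hqinf : (setOf q).Infinite := hSinf
  set f : ℕ → ℕ := fun x =>
    if x ∈ P then
      (if Nat.nth q (2 * Nat.count p x) = x then Nat.nth q (2 * Nat.count p x + 1)
       else Nat.nth q (2 * Nat.count p x))
    else x with hfdef
  have hfx_of_mem : ∀ x, x ∈ P → f x =
      (if Nat.nth q (2 * Nat.count p x) = x then Nat.nth q (2 * Nat.count p x + 1)
       else Nat.nth q (2 * Nat.count p x)) := by
    intro x hx
    simp only [hfdef]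
    rw [if_pos hx]
  have hfx_of_not : ∀ x, x ∉ P → f x = x := by
    intro x hx
    simp only [hfdef]
    rw [if_neg hx]
  have hfx_cases : ∀ x, x ∈ P →
      (Nat.nth q (2 * Nat.count p x) = x ∧ f x = Nat.nth q (2 * Nat.count p x + 1)) ∨
      (Nat.nth q (2 * Nat.count p x) ≠ x ∧ f x = Nat.nth q (2 * Nat.count p x)) := by
    intro x hx
    by_cases h : Nat.nth q (2 * Nat.count p x) = x
    · exact Or.inl ⟨h, by rw [hfx_of_mem x hx, if_pos h]⟩
    · exact Or.inr ⟨h, by rw [hfx_of_mem x hx, if_neg h]⟩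
  have hfS : ∀ x, x ∈ P → f x ∈ Sg := by
    intro x hx
    rcases hfx_cases x hx with ⟨_, he⟩ | ⟨_, he⟩ <;> rw [he] <;>
      exact Nat.nth_mem_of_infinite hqinf _
  have hfne : ∀ x, x ∈ P → f x ≠ x := by
    intro x hx
    rcases hfx_cases x hx with ⟨hc, he⟩ | ⟨hc, he⟩
    · rw [he]
      intro h2
      have := Nat.nth_injective hqinf (h2.trans hc.symm)
      omega
    · rw [he]
      exact hc
  have hinj : Function.Injective f := by
    intro x y hxy
    by_cases hx : x ∈ P <;> by_cases hy : y ∈ P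
    · rcases hfx_cases x hx with ⟨_, he1⟩ | ⟨_, he1⟩ <;>
        rcases hfx_cases y hy with ⟨_, he2⟩ | ⟨_, he2⟩ <;>
        exact (by
          have hij := Nat.nth_injective hqinf ((he1.symm.trans hxy).trans he2)
          have hcc : Nat.count p x = Nat.count p y := by omega
          calc x = Nat.nth p (Nat.count p x) := (Nat.nth_count hx).symm
            _ = Nat.nth p (Nat.count p y) := by rw [hcc]
            _ = y := Nat.nth_count hy)
    · exfalso
      have h1 : f x ∈ Sg := hfS x hx
      rw [hxy, hfx_of_not y hy] at h1
      exact hy (hSP h1)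
    · exfalso
      have h1 : f y ∈ Sg := hfS y hy
      rw [← hxy, hfx_of_not x hx] at h1
      exact hx (hSP h1)
    · rw [hfx_of_not x hx, hfx_of_not y hy] at hxy
      exact hxy
  have hinv : ∀ A ∈ I, f '' A ∈ I := by
    intro A hA
    have hsub : f '' A ⊆ A ∪ f '' (A ∩ P) := by
      rintro z ⟨x, hxA, rfl⟩
      by_cases hx : x ∈ P
      · exact Or.inr ⟨x, ⟨hxA, hx⟩, rfl⟩
      · rw [hfx_of_not x hx]
        exact Or.inl hxA
    rcases hkey with hS | hfin
    · have h1 : f '' (A ∩ P) ⊆ Sg := by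
        rintro z ⟨x, ⟨_, hxP⟩, rfl⟩
        exact hfS x hxP
      exact hI.1 _ _ (hI.2.1 _ _ hA (hI.1 _ _ hS h1)) hsub
    · have hAP : (A ∩ P).Finite :=
        hfin _ (hI.1 _ _ hA Set.inter_subset_left) Set.inter_subset_right
      exact hI.1 _ _ (hI.2.1 _ _ hA (hI.2.2.1 _ (hAP.image f))) hsub
  have hfixc : (fixedSet f)ᶜ = P := by
    ext x
    simp only [Set.mem_compl_iff, fixedSet, Set.mem_setOf_eq]
    constructor
    · intro h
      by_contra hx
      exact h (hfx_of_not x hx)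
    · intro hx
      exact hfne x hx
  have hXrange : X ⊆ Set.range f := by
    intro x hx
    exact ⟨x, hfx_of_not x (fun h => h hx)⟩
  have hrange_not : Set.range f ∉ I := fun h => hX (hI.1 _ _ h hXrange)
  have hWsub : P \ f '' P ⊆ (Set.range f)ᶜ := by
    rintro z ⟨hzP, hzn⟩ ⟨x, rfl⟩
    by_cases hx : x ∈ P
    · exact hzn ⟨x, hx, rfl⟩
    · exact hx (by rwa [hfx_of_not x hx] at hzP)
  have hrangec_not : (Set.range f)ᶜ ∉ I := by
    rcases hkey with hS | hfin
    · -- case `Sg ∈ I`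
      have hfPS : f '' P ⊆ Sg := by
        rintro z ⟨x, hx, rfl⟩
        exact hfS x hx
      have h1 : P \ Sg ⊆ (Set.range f)ᶜ := fun z hz =>
        hWsub ⟨hz.1, fun h => hz.2 (hfPS h)⟩
      intro h
      have hPS : P \ Sg ∈ I := hI.1 _ _ h h1
      refine hXc (hI.1 _ _ (hI.2.1 _ _ hPS hS) ?_)
      intro z hz
      by_cases h' : z ∈ Sg
      · exact Or.inr h'
      · exact Or.inl ⟨hz, h'⟩
    · -- case: every `T ∈ I` inside `P` is finite
      set w : ℕ → ℕ := fun n =>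
        if Nat.nth q (2 * n) = Nat.nth p n then Nat.nth q (2 * n)
        else Nat.nth q (2 * n + 1) with hwdef
      have hw_cases : ∀ n : ℕ,
          (Nat.nth q (2 * n) = Nat.nth p n ∧ w n = Nat.nth q (2 * n)) ∨
          (Nat.nth q (2 * n) ≠ Nat.nth p n ∧ w n = Nat.nth q (2 * n + 1)) := by
        intro n
        by_cases h : Nat.nth q (2 * n) = Nat.nth p n
        · exact Or.inl ⟨h, by simp only [hwdef]; rw [if_pos h]⟩
        · exact Or.inr ⟨h, by simp only [hwdef]; rw [if_neg h]⟩
      have hwS : ∀ n, w n ∈ Sg := by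
        intro n
        rcases hw_cases n with ⟨_, he⟩ | ⟨_, he⟩ <;> rw [he] <;>
          exact Nat.nth_mem_of_infinite hqinf _
      have hwinj : Function.Injective w := by
        intro m n h
        rcases hw_cases m with ⟨_, he1⟩ | ⟨_, he1⟩ <;>
          rcases hw_cases n with ⟨_, he2⟩ | ⟨_, he2⟩ <;>
          exact (by
            have hij := Nat.nth_injective hqinf ((he1.symm.trans h).trans he2)
            omega)
      have hwnot : ∀ n, w n ∉ f '' P := by
        rintro n ⟨x, hx, hfx⟩
        have hxeq : Nat.nth p (Nat.count p x) = x := Nat.nth_count hx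
        rcases hfx_cases x hx with ⟨hc1, he1⟩ | ⟨hc1, he1⟩ <;>
          rcases hw_cases n with ⟨hc2, he2⟩ | ⟨hc2, he2⟩
        · have hij := Nat.nth_injective hqinf ((he1.symm.trans hfx).trans he2)
          omega
        · have hij := Nat.nth_injective hqinf ((he1.symm.trans hfx).trans he2)
          have hcn : Nat.count p x = n := by omega
          rw [hcn] at hc1 hxeq
          exact hc2 (hc1.trans hxeq.symm)
        · have hij := Nat.nth_injective hqinf ((he1.symm.trans hfx).trans he2)
          have hcn : Nat.count p x = n := by omega
          rw [hcn] at hc1 hxeq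
          exact hc1 (hc2.trans hxeq)
        · have hij := Nat.nth_injective hqinf ((he1.symm.trans hfx).trans he2)
          omega
      have hWinf : (P \ f '' P).Infinite := by
        have hrw : Set.range w ⊆ P \ f '' P := by
          rintro z ⟨n, rfl⟩
          exact ⟨hSP (hwS n), hwnot n⟩
        exact (Set.infinite_range_of_injective hwinj).mono hrw
      intro h
      have hW : P \ f '' P ∈ I := hI.1 _ _ h hWsub
      exact hWinf (hfin _ hW Set.diff_subset)
  refine ⟨f, ⟨hinj, hinv⟩, ?_, hrange_not, hrangec_not⟩
  rw [hfixc]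
  exact hXc

/-- From non-maximality, produce the pair `(A, B)` of statement (b). -/
private lemma notmax_b {I : Set (Set ℕ)} (hI : IsIdeal I)
    (hnm : ¬ ∀ A : Set ℕ, A ∈ I ∨ Aᶜ ∈ I) :
    ∃ A B : Set ℕ, B ∉ I ∧ symmDiff A B ∉ I ∧ RSub I A B := by
  obtain ⟨f, ⟨hinj, hinv⟩, hfix, hrange, hrangec⟩ := notmax_construct hI hnm
  refine ⟨Set.univ, Set.range f, hrange, ?_, ?_⟩
  · have h1 : symmDiff (Set.univ : Set ℕ) (Set.range f) = (Set.range f)ᶜ := by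
      simp [Set.symmDiff_def, Set.compl_eq_univ_diff]
    rwa [h1]
  · refine ⟨Function.invFun f, ⟨fun x _ => Set.mem_univ _, ?_, ?_⟩, ?_⟩
    · rintro x ⟨a, rfl⟩ y ⟨b, rfl⟩ hxy
      rw [Function.leftInverse_invFun hinj a, Function.leftInverse_invFun hinj b] at hxy
      rw [hxy]
    · intro x _
      exact ⟨f x, ⟨x, rfl⟩, Function.leftInverse_invFun hinj x⟩
    · intro Xs hXsub hXr
      have hXI : Xs ∈ I := (restr_iff' hI hXsub).1 hXr
      have heq : Set.range f ∩ (Function.invFun f) ⁻¹' Xs = f '' Xs := by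
        ext z
        constructor
        · rintro ⟨⟨a, rfl⟩, hz⟩
          rw [Set.mem_preimage, Function.leftInverse_invFun hinj a] at hz
          exact ⟨a, hz, rfl⟩
        · rintro ⟨a, ha, rfl⟩
          refine ⟨⟨a, rfl⟩, ?_⟩
          rw [Set.mem_preimage, Function.leftInverse_invFun hinj a]
          exact ha
      rw [heq]
      refine (restr_iff' hI ?_).2 (hinv Xs hXI)
      rintro z ⟨a, _, rfl⟩
      exact ⟨a, rfl⟩

/-- (b) implies non-maximality. -/
private lemma b_notmax {I : Set (Set ℕ)} (hI : IsIdeal I)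
    (hb : ∃ A B : Set ℕ, B ∉ I ∧ symmDiff A B ∉ I ∧ RSub I A B) :
    ¬ ∀ A : Set ℕ, A ∈ I ∨ Aᶜ ∈ I := by
  intro hmax
  obtain ⟨A, B, hB, hsym, g, hbij, hpull⟩ := hb
  have hAI : A ∉ I := by
    intro hA
    have h1 : A ∈ restr I A := (restr_iff' hI subset_rfl).2 hA
    have h2 := hpull A subset_rfl h1
    have h3 : B ∩ g ⁻¹' A = B := by
      apply Set.inter_eq_self_of_subset_left
      intro b hb2
      exact hbij.1 hb2
    rw [h3] at h2
    exact hB ((restr_iff' hI subset_rfl).1 h2)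
  rcases hmax A with h | hAc
  · exact hAI h
  rcases hmax B with h | hBc
  · exact hB h
  apply hsym
  refine hI.1 _ _ (hI.2.1 _ _ hAc hBc) ?_
  intro z hz
  rcases Set.mem_symmDiff.1 hz with ⟨hz1, hz2⟩ | ⟨hz1, hz2⟩
  · exact Or.inr hz2
  · exact Or.inl hz2

/-- equivalence of (a), (b) and (c). -/
theorem stmt_13 (I : Set (Set ℕ)) (hI : IsIdeal I) :
    ((∃ f : ℕ → ℕ, Invariant I f ∧ (fixedSet f)ᶜ ∉ I ∧ Set.range f ∉ I) ↔
      (∃ A B : Set ℕ, B ∉ I ∧ symmDiff A B ∉ I ∧ RSub I A B)) ∧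
    ((∃ A B : Set ℕ, B ∉ I ∧ symmDiff A B ∉ I ∧ RSub I A B) ↔
      ¬ (∀ A : Set ℕ, A ∈ I ∨ Aᶜ ∈ I)) := by
  constructor
  · constructor
    · rintro ⟨f, hf, hfix, hrange⟩
      exact notmax_b hI (fun hmax => hrange (max_kills hI hmax hf hfix))
    · intro hb
      obtain ⟨f, hf, hfix, hrange, _⟩ := notmax_construct hI (b_notmax hI hb)
      exact ⟨f, hf, hfix, hrange⟩
  · constructor
    · exact b_notmax hI
    · exact notmax_b hI
end
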